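/- Let a DMIC whose transition probability factorizes as p(y1,y2|x1,x2) = p(y2|x1,x2) q(y1|x1,y2) (Markov chain X2 - (X1,Y2) - Y1) be used n times memorylessly, with input blocks X1^n and X2^n independent of each other, and outputs Y1^n, Y2^n. Then I(X1^n;Y1^n) + I(X2^n;Y2^n|X1^n) <= sum_{i=1}^n [ I(X1i;Y1i) + I(X2i;Y2i|X1i) ]. -/

import Mathlib

open scoped BigOperators

noncomputable section

namespace IT

/-- A probability mass function on a finite type. -/
def IsPMF {α : Type*} [Fintype α] (p : α → ℝ) : Prop :=
  (∀ a, 0 ≤ p a) ∧ ∑ a, p a = 1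

/-- The distribution (pushforward) of a random variable `X` under the pmf `μ`
on the sample space `Ω`. -/
def distOf {Ω α : Type*} [Fintype Ω] [DecidableEq α] (μ : Ω → ℝ) (X : Ω → α) : α → ℝ :=
  fun a => ∑ ω, if X ω = a then μ ω else 0

/-- Shannon entropy (base-2 logarithms) of a pmf on a finite type.
(Recall `Real.logb 2 0 = 0`, so the `0 log 0 = 0` convention is automatic.) -/
def ent {α : Type*} [Fintype α] (p : α → ℝ) : ℝ := -∑ a, p a * Real.logb 2 (p a)

/-- Entropy `H(X)` of a finite-valued random variable `X` on `(Ω, μ)`. -/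
def H {Ω α : Type*} [Fintype Ω] [Fintype α] [DecidableEq α] (μ : Ω → ℝ) (X : Ω → α) : ℝ :=
  ent (distOf μ X)

/-- Mutual information `I(X;Y)`. -/
def MI {Ω α β : Type*} [Fintype Ω] [Fintype α] [DecidableEq α] [Fintype β] [DecidableEq β]
    (μ : Ω → ℝ) (X : Ω → α) (Y : Ω → β) : ℝ :=
  H μ X + H μ Y - H μ (fun ω => (X ω, Y ω))

/-- Conditional mutual information `I(X;Y|Z)`. -/
def CMI {Ω α β γ : Type*} [Fintype Ω] [Fintype α] [DecidableEq α] [Fintype β] [DecidableEq β]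
    [Fintype γ] [DecidableEq γ] (μ : Ω → ℝ) (X : Ω → α) (Y : Ω → β) (Z : Ω → γ) : ℝ :=
  H μ (fun ω => (X ω, Z ω)) + H μ (fun ω => (Y ω, Z ω))
    - H μ (fun ω => (X ω, Y ω, Z ω)) - H μ Z

/-- `B` is conditionally independent of `A` given `C` (a Markov chain `A - C - B`). -/
def CondIndep {Ω α β γ : Type*} [Fintype Ω] [DecidableEq α] [DecidableEq β] [DecidableEq γ]
    (μ : Ω → ℝ) (A : Ω → α) (B : Ω → β) (C : Ω → γ) : Prop :=
  ∀ a b c,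
    distOf μ (fun ω => (A ω, B ω, C ω)) (a, b, c) * distOf μ C c =
      distOf μ (fun ω => (A ω, C ω)) (a, c) * distOf μ (fun ω => (B ω, C ω)) (b, c)

variable {A1 A2 B1 B2 : Type*}

/-- A discrete memoryless interference channel with input alphabets `A1, A2` and
output alphabets `B1, B2`: every pair of inputs yields a pmf on output pairs. -/
def IsChannel [Fintype B1] [Fintype B2] (W : A1 → A2 → B1 × B2 → ℝ) : Prop :=
  ∀ x1 x2, IsPMF (W x1 x2)

/-- DMZIC with weak interference: the transition probability factorizes as
`p(y1,y2|x1,x2) = p(y2|x2) q(y1|x1,y2)`, i.e. one-sided interference together with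
the Markov chain `X2 - (X1,Y2) - Y1`. -/
def WeakZ [Fintype B1] [Fintype B2] (W : A1 → A2 → B1 × B2 → ℝ) : Prop :=
  ∃ (p2 : A2 → B2 → ℝ) (q : A1 → B2 → B1 → ℝ),
    (∀ x2, IsPMF (p2 x2)) ∧ (∀ x1 y2, IsPMF (q x1 y2)) ∧
      ∀ x1 x2 y1 y2, W x1 x2 (y1, y2) = p2 x2 y2 * q x1 y2 y1

/-- Factorization `p(y1,y2|x1,x2) = p(y2|x1,x2) q(y1|x1,y2)`, i.e. the Markov chain
`X2 - (X1,Y2) - Y1`. -/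
def ChainX2X1Y2Y1 [Fintype B1] [Fintype B2] (W : A1 → A2 → B1 × B2 → ℝ) : Prop :=
  ∃ (pa : A1 → A2 → B2 → ℝ) (q : A1 → B2 → B1 → ℝ),
    (∀ x1 x2, IsPMF (pa x1 x2)) ∧ (∀ x1 y2, IsPMF (q x1 y2)) ∧
      ∀ x1 x2 y1 y2, W x1 x2 (y1, y2) = pa x1 x2 y2 * q x1 y2 y1

/-- The `n`-fold memoryless extension of the channel `W`. -/
def nFold (W : A1 → A2 → B1 × B2 → ℝ) (n : ℕ) (a : Fin n → A1) (b : Fin n → A2)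
    (y : (Fin n → B1) × (Fin n → B2)) : ℝ :=
  ∏ i, W (a i) (b i) (y.1 i, y.2 i)

/-- An `(n, M1, M2)` code for the interference channel. -/
structure Code (A1 A2 B1 B2 : Type*) (n M1 M2 : ℕ) where
  enc1 : Fin M1 → Fin n → A1
  enc2 : Fin M2 → Fin n → A2
  dec1 : (Fin n → B1) → Fin M1
  dec2 : (Fin n → B2) → Fin M2

/-- Average probability of error at receiver 1 (messages uniform and independent). -/
def err1 [Fintype B1] [Fintype B2] (W : A1 → A2 → B1 × B2 → ℝ) {n M1 M2 : ℕ}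
    (c : Code A1 A2 B1 B2 n M1 M2) : ℝ :=
  ((M1 : ℝ) * (M2 : ℝ))⁻¹ *
    ∑ w1 : Fin M1, ∑ w2 : Fin M2, ∑ y : (Fin n → B1) × (Fin n → B2),
      if c.dec1 y.1 ≠ w1 then nFold W n (c.enc1 w1) (c.enc2 w2) y else 0

/-- Average probability of error at receiver 2 (messages uniform and independent). -/
def err2 [Fintype B1] [Fintype B2] (W : A1 → A2 → B1 × B2 → ℝ) {n M1 M2 : ℕ}
    (c : Code A1 A2 B1 B2 n M1 M2) : ℝ :=
  ((M1 : ℝ) * (M2 : ℝ))⁻¹ *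
    ∑ w1 : Fin M1, ∑ w2 : Fin M2, ∑ y : (Fin n → B1) × (Fin n → B2),
      if c.dec2 y.2 ≠ w2 then nFold W n (c.enc1 w1) (c.enc2 w2) y else 0

/-- A (nonnegative) rate pair `(R1, R2)` is achievable if there are codes of blocklength `n`,
with at least `2 ^ (n R1)` and `2 ^ (n R2)` messages, whose average error probabilities at
the two receivers can be made arbitrarily small. -/
def Achievable [Fintype B1] [Fintype B2] (W : A1 → A2 → B1 × B2 → ℝ) (R1 R2 : ℝ) : Prop :=
  0 ≤ R1 ∧ 0 ≤ R2 ∧ ∀ ε : ℝ, 0 < ε →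
    ∃ (n M1 M2 : ℕ) (c : Code A1 A2 B1 B2 n M1 M2), 0 < n ∧
      (2 : ℝ) ^ ((n : ℝ) * R1) ≤ (M1 : ℝ) ∧ (2 : ℝ) ^ ((n : ℝ) * R2) ≤ (M2 : ℝ) ∧
      err1 W c ≤ ε ∧ err2 W c ≤ ε

/-- The sum-rate capacity: the supremum of `R1 + R2` over achievable rate pairs. -/
def sumCapacity [Fintype B1] [Fintype B2] (W : A1 → A2 → B1 × B2 → ℝ) : ℝ :=
  sSup {r : ℝ | ∃ R1 R2 : ℝ, Achievable W R1 R2 ∧ r = R1 + R2}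

/-- The capacity region: the closure of the set of achievable rate pairs. -/
def capacityRegion [Fintype B1] [Fintype B2] (W : A1 → A2 → B1 × B2 → ℝ) : Set (ℝ × ℝ) :=
  closure {p : ℝ × ℝ | Achievable W p.1 p.2}

/-- The joint pmf of `(X1, X2, Y1, Y2)` when the product input `p1 × p2` is fed to `W`. -/
def jointOf (W : A1 → A2 → B1 × B2 → ℝ) (p1 : A1 → ℝ) (p2 : A2 → ℝ) :
    A1 × A2 × B1 × B2 → ℝ :=
  fun z => p1 z.1 * p2 z.2.1 * W z.1 z.2.1 (z.2.2.1, z.2.2.2)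

/-- Coordinate projections on `A1 × A2 × B1 × B2`. -/
def pX1 : A1 × A2 × B1 × B2 → A1 := fun z => z.1
def pX2 : A1 × A2 × B1 × B2 → A2 := fun z => z.2.1
def pY1 : A1 × A2 × B1 × B2 → B1 := fun z => z.2.2.1
def pY2 : A1 × A2 × B1 × B2 → B2 := fun z => z.2.2.2

/-- The binary entropy function (base-2 logarithms). -/
def h2 (t : ℝ) : ℝ := -(t * Real.logb 2 t) - (1 - t) * Real.logb 2 (1 - t)

end IT

namespace IT
set_option linter.unusedSectionVars false
set_option linter.unusedVariables false
set_option maxHeartbeats 1000000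

section Basic
variable {Ω α β : Type*} [Fintype Ω] [Fintype α] [DecidableEq α] [Fintype β] [DecidableEq β]
  (μ : Ω → ℝ)

lemma distOf_nonneg (h : ∀ ω, 0 ≤ μ ω) (X : Ω → α) (a : α) : 0 ≤ distOf μ X a := by
  refine Finset.sum_nonneg fun ω _ => ?_
  split <;> simp [h ω]

lemma sum_distOf (X : Ω → α) : ∑ a, distOf μ X a = ∑ ω, μ ω := by
  unfold distOf
  rw [Finset.sum_comm]
  simp [Finset.sum_ite_eq']

lemma distOf_comp (X : Ω → α) (f : α → β) :
    distOf μ (fun ω => f (X ω)) = distOf (distOf μ X) f := by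
  funext b
  unfold distOf
  calc (∑ ω, if f (X ω) = b then μ ω else 0)
      = ∑ ω, ∑ a : α, (if f a = b then (if X ω = a then μ ω else 0) else 0) := by
        refine Finset.sum_congr rfl fun ω _ => ?_
        rw [Finset.sum_eq_single (X ω)]
        · simp
        · intro a _ ha
          by_cases h : f a = b
          · rw [if_pos h, if_neg (Ne.symm ha)]
          · rw [if_neg h]
        · simp
    _ = ∑ a : α, (if f a = b then (∑ ω, if X ω = a then μ ω else 0) else 0) := by
        rw [Finset.sum_comm]
        refine Finset.sum_congr rfl fun a _ => ?_
        split <;> simp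

/-- sums over fibers -/
lemma sum_mul_comp (X : Ω → α) (g : α → ℝ) :
    ∑ ω, μ ω * g (X ω) = ∑ a, distOf μ X a * g a := by
  unfold distOf
  simp only [Finset.sum_mul]
  rw [Finset.sum_comm]
  refine Finset.sum_congr rfl fun ω _ => ?_
  rw [Finset.sum_eq_single (X ω)]
  · simp
  · intro a _ ha
    rw [if_neg (Ne.symm ha), zero_mul]
  · simp

lemma H_comp_inj (X : Ω → α) (f : α → β) (hf : Function.Injective f) :
    H μ (fun ω => f (X ω)) = H μ X := by
  have key : distOf μ (fun ω => f (X ω)) = distOf (distOf μ X) f := distOf_comp μ X f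
  unfold H ent
  rw [key]
  congr 1
  have hval : ∀ a, distOf (distOf μ X) f (f a) = distOf μ X a := by
    intro a
    unfold distOf
    rw [Finset.sum_eq_single a]
    · simp
    · intro c _ hc
      rw [if_neg (fun h => hc (hf h))]
    · simp
  have h1 : ∀ b ∉ Finset.image f Finset.univ,
      distOf (distOf μ X) f b * Real.logb 2 (distOf (distOf μ X) f b) = 0 := by
    intro b hb
    have : distOf (distOf μ X) f b = 0 := by
      unfold distOf
      refine Finset.sum_eq_zero fun a _ => ?_
      have : f a ≠ b := fun h => hb (Finset.mem_image.2 ⟨a, Finset.mem_univ a, h⟩)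
      rw [if_neg this]
    simp [this]
  rw [← Finset.sum_subset (Finset.subset_univ (Finset.image f Finset.univ)) (fun b _ hb => h1 b hb)]
  rw [Finset.sum_image (fun a _ b _ h => hf h)]
  refine Finset.sum_congr rfl fun a _ => ?_
  rw [hval]

lemma H_const_unit (hμ1 : ∑ ω, μ ω = 1) : H μ (fun _ => (() : Unit)) = 0 := by
  unfold H ent distOf
  simp [hμ1]

end Basic
section Gibbs

open Real

/-- Gibbs' inequality. -/
lemma gibbs {ι : Type*} [Fintype ι] (p q : ι → ℝ)
    (hp0 : ∀ i, 0 ≤ p i) (hq0 : ∀ i, 0 ≤ q i)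
    (hpq : ∀ i, 0 < p i → 0 < q i) (hsum : ∑ i, q i ≤ ∑ i, p i) :
    ∑ i, p i * Real.logb 2 (q i) ≤ ∑ i, p i * Real.logb 2 (p i) := by
  rw [← sub_nonpos, ← Finset.sum_sub_distrib]
  have key : ∀ i, p i * Real.logb 2 (q i) - p i * Real.logb 2 (p i)
      ≤ (q i - p i) / Real.log 2 := by
    intro i
    rcases eq_or_lt_of_le (hp0 i) with h | h
    · rw [← h]
      simp [div_nonneg (hq0 i) (Real.log_nonneg one_le_two)]
    · have hq := hpq i h
      rw [← mul_sub, Real.logb, Real.logb, ← sub_div, ← Real.log_div (ne_of_gt hq) (ne_of_gt h),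
        ← mul_div_assoc, div_le_div_iff_of_pos_right (Real.log_pos one_lt_two)]
      calc p i * Real.log (q i / p i) ≤ p i * (q i / p i - 1) := by
            exact mul_le_mul_of_nonneg_left (Real.log_le_sub_one_of_pos (div_pos hq h)) (le_of_lt h)
        _ = q i - p i := by field_simp
  calc ∑ i, (p i * Real.logb 2 (q i) - p i * Real.logb 2 (p i))
      ≤ ∑ i, (q i - p i) / Real.log 2 := Finset.sum_le_sum fun i _ => key i
    _ = (∑ i, q i - ∑ i, p i) / Real.log 2 := by
        rw [← Finset.sum_div, Finset.sum_sub_distrib]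
    _ ≤ 0 := div_nonpos_of_nonpos_of_nonneg (sub_nonpos.2 hsum) (Real.log_nonneg one_le_two)

end Gibbs


section CMIsec
variable {Ω α β γ : Type*} [Fintype Ω] [Fintype α] [DecidableEq α] [Fintype β] [DecidableEq β]
  [Fintype γ] [DecidableEq γ] (μ : Ω → ℝ) (X : Ω → α) (Y : Ω → β) (Z : Ω → γ)

lemma distOf_proj13 (x : α) (z : γ) :
    distOf μ (fun ω => (X ω, Z ω)) (x, z)
      = ∑ b, distOf μ (fun ω => (X ω, Y ω, Z ω)) (x, b, z) := by
  unfold distOf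
  rw [Finset.sum_comm]
  refine Finset.sum_congr rfl fun ω _ => ?_
  by_cases h1 : X ω = x <;> by_cases h2 : Z ω = z <;>
    simp [Prod.ext_iff, h1, h2, Finset.sum_ite_eq]

lemma distOf_proj23 (y : β) (z : γ) :
    distOf μ (fun ω => (Y ω, Z ω)) (y, z)
      = ∑ a, distOf μ (fun ω => (X ω, Y ω, Z ω)) (a, y, z) := by
  unfold distOf
  rw [Finset.sum_comm]
  refine Finset.sum_congr rfl fun ω _ => ?_
  by_cases h1 : Y ω = y <;> by_cases h2 : Z ω = z <;>
    simp [Prod.ext_iff, h1, h2, Finset.sum_ite_eq]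

lemma distOf_projZ (z : γ) :
    distOf μ Z z = ∑ a, ∑ b, distOf μ (fun ω => (X ω, Y ω, Z ω)) (a, b, z) := by
  unfold distOf
  calc (∑ ω, if Z ω = z then μ ω else 0)
      = ∑ ω, ∑ a, ∑ b, (if (X ω, Y ω, Z ω) = (a, b, z) then μ ω else 0) := by
        refine Finset.sum_congr rfl fun ω _ => ?_
        by_cases h2 : Z ω = z <;> simp [Prod.ext_iff, h2, Finset.sum_ite_eq, ite_and]
    _ = ∑ a, ∑ ω, ∑ b, (if (X ω, Y ω, Z ω) = (a, b, z) then μ ω else 0) := Finset.sum_comm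
    _ = ∑ a, ∑ b, ∑ ω, (if (X ω, Y ω, Z ω) = (a, b, z) then μ ω else 0) :=
        Finset.sum_congr rfl fun a _ => Finset.sum_comm

lemma CMI_eq_sum :
    CMI μ X Y Z =
      ∑ a, ∑ b, ∑ c,
        distOf μ (fun ω => (X ω, Y ω, Z ω)) (a, b, c) *
          (Real.logb 2 (distOf μ (fun ω => (X ω, Y ω, Z ω)) (a, b, c))
           + Real.logb 2 (∑ a', ∑ b', distOf μ (fun ω => (X ω, Y ω, Z ω)) (a', b', c))
           - Real.logb 2 (∑ b', distOf μ (fun ω => (X ω, Y ω, Z ω)) (a, b', c))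
           - Real.logb 2 (∑ a', distOf μ (fun ω => (X ω, Y ω, Z ω)) (a', b, c))) := by
  set p := distOf μ (fun ω => (X ω, Y ω, Z ω)) with hp
  have h13 : H μ (fun ω => (X ω, Z ω))
      = -∑ a, ∑ b, ∑ c, p (a, b, c) * Real.logb 2 (∑ b', p (a, b', c)) := by
    unfold H ent
    rw [Fintype.sum_prod_type]
    congr 1
    refine Finset.sum_congr rfl fun a _ => ?_
    calc ∑ c, distOf μ (fun ω => (X ω, Z ω)) (a, c)
            * Real.logb 2 (distOf μ (fun ω => (X ω, Z ω)) (a, c))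
        = ∑ c, ∑ b, p (a, b, c) * Real.logb 2 (∑ b', p (a, b', c)) := by
          refine Finset.sum_congr rfl fun c _ => ?_
          rw [distOf_proj13 μ X Y Z a c, Finset.sum_mul]
      _ = ∑ b, ∑ c, p (a, b, c) * Real.logb 2 (∑ b', p (a, b', c)) := Finset.sum_comm
  have h23 : H μ (fun ω => (Y ω, Z ω))
      = -∑ a, ∑ b, ∑ c, p (a, b, c) * Real.logb 2 (∑ a', p (a', b, c)) := by
    unfold H ent
    rw [Fintype.sum_prod_type]
    congr 1
    calc ∑ b, ∑ c, distOf μ (fun ω => (Y ω, Z ω)) (b, c)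
            * Real.logb 2 (distOf μ (fun ω => (Y ω, Z ω)) (b, c))
        = ∑ b, ∑ c, ∑ a, p (a, b, c) * Real.logb 2 (∑ a', p (a', b, c)) := by
          refine Finset.sum_congr rfl fun b _ => Finset.sum_congr rfl fun c _ => ?_
          rw [distOf_proj23 μ X Y Z b c, Finset.sum_mul]
      _ = ∑ b, ∑ a, ∑ c, p (a, b, c) * Real.logb 2 (∑ a', p (a', b, c)) := by
          exact Finset.sum_congr rfl fun b _ => Finset.sum_comm
      _ = ∑ a, ∑ b, ∑ c, p (a, b, c) * Real.logb 2 (∑ a', p (a', b, c)) := Finset.sum_comm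
  have hZ : H μ Z
      = -∑ a, ∑ b, ∑ c, p (a, b, c) * Real.logb 2 (∑ a', ∑ b', p (a', b', c)) := by
    unfold H ent
    congr 1
    calc ∑ c, distOf μ Z c * Real.logb 2 (distOf μ Z c)
        = ∑ c, ∑ a, ∑ b, p (a, b, c) * Real.logb 2 (∑ a', ∑ b', p (a', b', c)) := by
          refine Finset.sum_congr rfl fun c _ => ?_
          rw [distOf_projZ μ X Y Z c, Finset.sum_mul]
          exact Finset.sum_congr rfl fun a _ => Finset.sum_mul ..
      _ = ∑ a, ∑ c, ∑ b, p (a, b, c) * Real.logb 2 (∑ a', ∑ b', p (a', b', c)) :=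
          Finset.sum_comm
      _ = ∑ a, ∑ b, ∑ c, p (a, b, c) * Real.logb 2 (∑ a', ∑ b', p (a', b', c)) :=
          Finset.sum_congr rfl fun a _ => Finset.sum_comm
  have hp3 : H μ (fun ω => (X ω, Y ω, Z ω))
      = -∑ a, ∑ b, ∑ c, p (a, b, c) * Real.logb 2 (p (a, b, c)) := by
    unfold H ent
    rw [← hp, Fintype.sum_prod_type]
    congr 1
    exact Finset.sum_congr rfl fun a _ => Fintype.sum_prod_type _
  unfold CMI
  rw [h13, h23, hZ, hp3]
  simp only [← Finset.sum_add_distrib, ← Finset.sum_sub_distrib, ← Finset.sum_neg_distrib]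
  refine Finset.sum_congr rfl fun a _ => Finset.sum_congr rfl fun b _ =>
    Finset.sum_congr rfl fun c _ => ?_
  ring
end CMIsec

section CMIsec2
variable {Ω α β γ : Type*} [Fintype Ω] [Fintype α] [DecidableEq α] [Fintype β] [DecidableEq β]
  [Fintype γ] [DecidableEq γ] (μ : Ω → ℝ) (X : Ω → α) (Y : Ω → β) (Z : Ω → γ)

lemma CMI_nonneg (hμ0 : ∀ ω, 0 ≤ μ ω) : 0 ≤ CMI μ X Y Z := by
  rw [CMI_eq_sum]
  set p := distOf μ (fun ω => (X ω, Y ω, Z ω)) with hp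
  have hp0 : ∀ t, 0 ≤ p t := fun t => distOf_nonneg μ hμ0 _ t
  set m13 : α → γ → ℝ := fun a c => ∑ b', p (a, b', c) with hm13
  set m23 : β → γ → ℝ := fun b c => ∑ a', p (a', b, c) with hm23
  set mZ : γ → ℝ := fun c => ∑ a', ∑ b', p (a', b', c) with hmZ
  have hm13nn : ∀ a c, 0 ≤ m13 a c := fun a c => Finset.sum_nonneg fun b _ => hp0 _
  have hm23nn : ∀ b c, 0 ≤ m23 b c := fun b c => Finset.sum_nonneg fun a _ => hp0 _
  have hmZnn : ∀ c, 0 ≤ mZ c := fun c =>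
    Finset.sum_nonneg fun a _ => Finset.sum_nonneg fun b _ => hp0 _
  have hle13 : ∀ a b c, p (a, b, c) ≤ m13 a c := fun a b c =>
    Finset.single_le_sum (fun b' _ => hp0 (a, b', c)) (Finset.mem_univ b)
  have hle23 : ∀ a b c, p (a, b, c) ≤ m23 b c := fun a b c =>
    Finset.single_le_sum (fun a' _ => hp0 (a', b, c)) (Finset.mem_univ a)
  have hleZ : ∀ a c, m13 a c ≤ mZ c := fun a c =>
    Finset.single_le_sum (f := fun a' => ∑ b', p (a', b', c))
      (fun a' _ => Finset.sum_nonneg fun b' _ => hp0 _) (Finset.mem_univ a)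
  set Q : α × β × γ → ℝ := fun t =>
    if mZ t.2.2 = 0 then 0
    else m13 t.1 t.2.2 * m23 t.2.1 t.2.2 / mZ t.2.2 with hQ
  have hQ0 : ∀ t, 0 ≤ Q t := by
    intro t
    rw [hQ]
    dsimp only
    split
    · exact le_rfl
    · exact div_nonneg (mul_nonneg (hm13nn _ _) (hm23nn _ _)) (hmZnn _)
  have hPQ : ∀ t, 0 < p t → 0 < Q t := by
    rintro ⟨a, b, c⟩ h
    have h13 : 0 < m13 a c := lt_of_lt_of_le h (hle13 a b c)
    have h23 : 0 < m23 b c := lt_of_lt_of_le h (hle23 a b c)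
    have hZp : 0 < mZ c := lt_of_lt_of_le h13 (hleZ a c)
    rw [hQ]
    dsimp only
    rw [if_neg (ne_of_gt hZp)]
    exact div_pos (mul_pos h13 h23) hZp
  have e23 : ∀ c, ∑ b, m23 b c = mZ c := fun c => Finset.sum_comm
  have e13 : ∀ c, ∑ a, m13 a c = mZ c := fun c => rfl
  have hsumP : ∑ t, p t = ∑ c, mZ c := by
    calc ∑ t, p t = ∑ a, ∑ b, ∑ c, p (a, b, c) := by
          rw [Fintype.sum_prod_type]
          exact Finset.sum_congr rfl fun a _ => Fintype.sum_prod_type _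
      _ = ∑ a, ∑ c, ∑ b, p (a, b, c) := Finset.sum_congr rfl fun a _ => Finset.sum_comm
      _ = ∑ c, ∑ a, ∑ b, p (a, b, c) := Finset.sum_comm
  have hsumQ : ∑ t, Q t = ∑ c, mZ c := by
    have hQc : ∀ c, ∑ a, ∑ b, Q (a, b, c) = mZ c := by
      intro c
      by_cases h : mZ c = 0
      · have : ∀ a b, Q (a, b, c) = 0 := by
          intro a b; rw [hQ]; dsimp only; rw [if_pos h]
        simp only [this, Finset.sum_const_zero]
        exact h.symm
      · have hQv : ∀ a b, Q (a, b, c) = m13 a c * m23 b c / mZ c := by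
          intro a b; rw [hQ]; dsimp only; rw [if_neg h]
        have inner : ∀ a, ∑ b, Q (a, b, c) = m13 a c := by
          intro a
          calc ∑ b, Q (a, b, c) = ∑ b, m13 a c * m23 b c / mZ c :=
                Finset.sum_congr rfl fun b _ => hQv a b
            _ = (m13 a c * ∑ b, m23 b c) / mZ c := by
                rw [Finset.mul_sum, Finset.sum_div]
            _ = m13 a c * mZ c / mZ c := by rw [e23]
            _ = m13 a c := by rw [mul_div_assoc, div_self h, mul_one]
        calc ∑ a, ∑ b, Q (a, b, c) = ∑ a, m13 a c :=
              Finset.sum_congr rfl fun a _ => inner a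
          _ = mZ c := e13 c
    calc ∑ t, Q t = ∑ a, ∑ b, ∑ c, Q (a, b, c) := by
          rw [Fintype.sum_prod_type]
          exact Finset.sum_congr rfl fun a _ => Fintype.sum_prod_type _
      _ = ∑ a, ∑ c, ∑ b, Q (a, b, c) := Finset.sum_congr rfl fun a _ => Finset.sum_comm
      _ = ∑ c, ∑ a, ∑ b, Q (a, b, c) := Finset.sum_comm
      _ = ∑ c, mZ c := Finset.sum_congr rfl fun c _ => hQc c
  have key : ∀ a b c,
      p (a, b, c) * (Real.logb 2 (p (a, b, c)) + Real.logb 2 (mZ c)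
          - Real.logb 2 (m13 a c) - Real.logb 2 (m23 b c))
        = p (a, b, c) * Real.logb 2 (p (a, b, c)) - p (a, b, c) * Real.logb 2 (Q (a, b, c)) := by
    intro a b c
    rcases eq_or_lt_of_le (hp0 (a, b, c)) with h | h
    · rw [← h]; ring
    · have h13 : 0 < m13 a c := lt_of_lt_of_le h (hle13 a b c)
      have h23 : 0 < m23 b c := lt_of_lt_of_le h (hle23 a b c)
      have hZp : 0 < mZ c := lt_of_lt_of_le h13 (hleZ a c)
      have hQv : Q (a, b, c) = m13 a c * m23 b c / mZ c := by
        rw [hQ]; dsimp only; rw [if_neg (ne_of_gt hZp)]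
      rw [hQv, Real.logb_div (ne_of_gt (mul_pos h13 h23)) (ne_of_gt hZp),
        Real.logb_mul (ne_of_gt h13) (ne_of_gt h23)]
      ring
  calc (0:ℝ) ≤ ∑ t, p t * Real.logb 2 (p t) - ∑ t, p t * Real.logb 2 (Q t) :=
        sub_nonneg.2 (gibbs p Q hp0 hQ0 (fun t => hPQ t) (by rw [hsumQ, hsumP]))
    _ = ∑ t : α × β × γ, (p t * Real.logb 2 (p t) - p t * Real.logb 2 (Q t)) :=
        (Finset.sum_sub_distrib _ _).symm
    _ = ∑ a, ∑ b, ∑ c, (p (a, b, c) * Real.logb 2 (p (a, b, c))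
          - p (a, b, c) * Real.logb 2 (Q (a, b, c))) := by
        rw [Fintype.sum_prod_type]
        exact Finset.sum_congr rfl fun a _ => Fintype.sum_prod_type _
    _ = ∑ a, ∑ b, ∑ c, p (a, b, c) * (Real.logb 2 (p (a, b, c)) + Real.logb 2 (mZ c)
          - Real.logb 2 (m13 a c) - Real.logb 2 (m23 b c)) := by
        refine Finset.sum_congr rfl fun a _ => Finset.sum_congr rfl fun b _ =>
          Finset.sum_congr rfl fun c _ => (key a b c).symm

lemma CMI_eq_zero_of_factor (F : α → γ → ℝ) (G : β → γ → ℝ)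
    (hF : ∀ a c, 0 ≤ F a c) (hG : ∀ b c, 0 ≤ G b c)
    (hfac : ∀ a b c, distOf μ (fun ω => (X ω, Y ω, Z ω)) (a, b, c) = F a c * G b c) :
    CMI μ X Y Z = 0 := by
  rw [CMI_eq_sum]
  refine Finset.sum_eq_zero fun a _ => Finset.sum_eq_zero fun b _ =>
    Finset.sum_eq_zero fun c _ => ?_
  simp only [hfac]
  by_cases hz : F a c * G b c = 0
  · rw [hz, zero_mul]
  · have hFp : 0 < F a c := (hF a c).lt_of_ne fun h => hz (by rw [← h, zero_mul])
    have hGp : 0 < G b c := (hG b c).lt_of_ne fun h => hz (by rw [← h, mul_zero])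
    have hSF : 0 < ∑ a', F a' c :=
      lt_of_lt_of_le hFp (Finset.single_le_sum (fun a' _ => hF a' c) (Finset.mem_univ a))
    have hSG : 0 < ∑ b', G b' c :=
      lt_of_lt_of_le hGp (Finset.single_le_sum (fun b' _ => hG b' c) (Finset.mem_univ b))
    have eb : ∑ b', F a c * G b' c = F a c * ∑ b', G b' c := (Finset.mul_sum ..).symm
    have ea : ∑ a', F a' c * G b c = (∑ a', F a' c) * G b c := (Finset.sum_mul ..).symm
    have eab : ∑ a', ∑ b', F a' c * G b' c = (∑ a', F a' c) * ∑ b', G b' c := by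
      rw [Finset.sum_mul]
      exact Finset.sum_congr rfl fun a' _ => (Finset.mul_sum ..).symm
    rw [eb, ea, eab, Real.logb_mul (ne_of_gt hFp) (ne_of_gt hGp),
      Real.logb_mul (ne_of_gt hSF) (ne_of_gt hSG),
      Real.logb_mul (ne_of_gt hFp) (ne_of_gt hSG),
      Real.logb_mul (ne_of_gt hSF) (ne_of_gt hGp)]
    ring

end CMIsec2

section Subadd
variable {Ω α β γ δ : Type*} [Fintype Ω] [Fintype α] [DecidableEq α] [Fintype β] [DecidableEq β]
  [Fintype γ] [DecidableEq γ] [Fintype δ] [DecidableEq δ] (μ : Ω → ℝ)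

/-- Dropping part of the conditioning increases conditional entropy. -/
lemma cond_drop (hμ0 : ∀ ω, 0 ≤ μ ω) (A : Ω → α) (D : Ω → γ) (f : γ → δ) :
    H μ (fun ω => (A ω, D ω)) - H μ D
      ≤ H μ (fun ω => (A ω, f (D ω))) - H μ (fun ω => f (D ω)) := by
  have h := CMI_nonneg μ A D (fun ω => f (D ω)) hμ0
  unfold CMI at h
  have e1 : H μ (fun ω => (D ω, f (D ω))) = H μ D :=
    H_comp_inj μ D (fun d => (d, f d)) (by intro x y hxy; exact (Prod.ext_iff.1 hxy).1)
  have e2 : H μ (fun ω => (A ω, D ω, f (D ω))) = H μ (fun ω => (A ω, D ω)) :=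
    H_comp_inj μ (fun ω => (A ω, D ω)) (fun t => (t.1, t.2, f t.2))
      (by intro x y hxy
          obtain ⟨h1, h2⟩ := Prod.ext_iff.1 hxy
          exact Prod.ext_iff.2 ⟨h1, (Prod.ext_iff.1 h2).1⟩)
  have h' : 0 ≤ H μ (fun ω => (A ω, f (D ω))) + H μ D
      - H μ (fun ω => (A ω, D ω)) - H μ (fun ω => f (D ω)) := by
    calc (0:ℝ) ≤ H μ (fun ω => (A ω, f (D ω))) + H μ (fun ω => (D ω, f (D ω)))
        - H μ (fun ω => (A ω, D ω, f (D ω))) - H μ (fun ω => f (D ω)) := h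
      _ = _ := by rw [e1, e2]
  linarith

/-- Telescoped conditional subadditivity. -/
lemma subadd_cond (hμ0 : ∀ ω, 0 ≤ μ ω) {n : ℕ} (Y : Ω → Fin n → β) (C : Ω → γ)
    (f : Fin n → γ → δ) :
    H μ (fun ω => (Y ω, C ω)) - H μ C
      ≤ ∑ i : Fin n, (H μ (fun ω => (Y ω i, f i (C ω))) - H μ (fun ω => f i (C ω))) := by
  have main : ∀ k (hk : k ≤ n),
      H μ (fun ω => ((fun j : Fin k => Y ω (Fin.castLE hk j)), C ω)) - H μ C
        ≤ ∑ i ∈ Finset.range k,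
            (if h : i < n then
              H μ (fun ω => (Y ω ⟨i, h⟩, f ⟨i, h⟩ (C ω))) - H μ (fun ω => f ⟨i, h⟩ (C ω))
             else 0) := by
    intro k
    induction k with
    | zero =>
      intro hk
      have e0 : (fun ω => ((fun j : Fin 0 => Y ω (Fin.castLE hk j)), C ω))
          = fun ω => ((fun j : Fin 0 => j.elim0), C ω) := by
        funext ω
        refine Prod.ext_iff.2 ⟨?_, rfl⟩
        funext j
        exact j.elim0
      have e1 : H μ (fun ω => ((fun j : Fin 0 => j.elim0 : Fin 0 → β), C ω)) = H μ C :=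
        H_comp_inj μ C (fun c => ((fun j : Fin 0 => j.elim0), c))
          (by intro x y hxy; exact (Prod.ext_iff.1 hxy).2)
      rw [e0, e1]
      simp
    | succ k ih =>
      intro hk1
      have hkn : k < n := hk1
      have hk : k ≤ n := le_of_lt hkn
      set D : Ω → (Fin k → β) × γ :=
        fun ω => ((fun j : Fin k => Y ω (Fin.castLE hk j)), C ω) with hD
      set A : Ω → β := fun ω => Y ω ⟨k, hkn⟩ with hA
      have step1 : H μ (fun ω => ((fun j : Fin (k+1) => Y ω (Fin.castLE hk1 j)), C ω))
          = H μ (fun ω => (A ω, D ω)) := by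
        have φinj : Function.Injective
            (fun t : β × ((Fin k → β) × γ) =>
              ((Fin.snoc t.2.1 t.1 : Fin (k+1) → β), t.2.2)) := by
          rintro ⟨v, w, c⟩ ⟨v', w', c'⟩ hxy
          obtain ⟨h1, h2⟩ := Prod.ext_iff.1 hxy
          simp only at h1 h2
          have hv : v = v' := by
            have := congrFun h1 (Fin.last k)
            simpa using this
          have hw : w = w' := by
            funext j
            have := congrFun h1 j.castSucc
            simpa using this
          simp [hv, hw, h2]
        have := H_comp_inj μ (fun ω => (A ω, D ω))
          (fun t : β × ((Fin k → β) × γ) =>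
            ((Fin.snoc t.2.1 t.1 : Fin (k+1) → β), t.2.2)) φinj
        rw [← this]
        congr 1
        funext ω
        refine Prod.ext_iff.2 ⟨?_, rfl⟩
        funext j
        rcases Fin.eq_castSucc_or_eq_last j with ⟨j', rfl⟩ | rfl
        · simp [hD, Fin.snoc_castSucc]
        · simp [hA, hD, Fin.snoc_last]
          congr 1
      have step2 : H μ (fun ω => (A ω, D ω)) - H μ D
          ≤ H μ (fun ω => (A ω, f ⟨k, hkn⟩ (C ω))) - H μ (fun ω => f ⟨k, hkn⟩ (C ω)) :=
        cond_drop μ hμ0 A D (fun t => f ⟨k, hkn⟩ t.2)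
      rw [Finset.sum_range_succ]
      have hlast : (if h : k < n then
              H μ (fun ω => (Y ω ⟨k, h⟩, f ⟨k, h⟩ (C ω))) - H μ (fun ω => f ⟨k, h⟩ (C ω))
             else 0)
          = H μ (fun ω => (A ω, f ⟨k, hkn⟩ (C ω))) - H μ (fun ω => f ⟨k, hkn⟩ (C ω)) := by
        rw [dif_pos hkn]
      rw [step1, hlast]
      have ihk := ih hk
      rw [← hD] at ihk
      linarith
  have fin := main n le_rfl
  have efin : (fun ω => ((fun j : Fin n => Y ω (Fin.castLE le_rfl j)), C ω))
      = fun ω => (Y ω, C ω) := by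
    funext ω
    refine Prod.ext_iff.2 ⟨?_, rfl⟩
    funext j
    rfl
  rw [efin] at fin
  refine le_trans fin (le_of_eq ?_)
  rw [← Fin.sum_univ_eq_sum_range
    (fun i => (if h : i < n then
              H μ (fun ω => (Y ω ⟨i, h⟩, f ⟨i, h⟩ (C ω))) - H μ (fun ω => f ⟨i, h⟩ (C ω))
             else 0)) n]
  refine Finset.sum_congr rfl fun i _ => ?_
  rw [dif_pos i.isLt]

end Subadd

section Channel

lemma ent_joint_channel {α β : Type*} [Fintype α] [Fintype β] (r : α → ℝ) (K : α → β → ℝ)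
    (hrow : ∀ a, ∑ b, K a b = 1) :
    ∑ a, ∑ b, (r a * K a b) * Real.logb 2 (r a * K a b)
      = ∑ a, r a * Real.logb 2 (r a) + ∑ a, ∑ b, r a * K a b * Real.logb 2 (K a b) := by
  have key : ∀ a b, (r a * K a b) * Real.logb 2 (r a * K a b)
      = (r a * Real.logb 2 (r a)) * K a b + r a * K a b * Real.logb 2 (K a b) := by
    intro a b
    by_cases h1 : r a = 0
    · simp [h1]
    · by_cases h2 : K a b = 0
      · simp [h2]
      · rw [Real.logb_mul h1 h2]; ring
  simp only [key, Finset.sum_add_distrib]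
  congr 1
  refine Finset.sum_congr rfl fun a _ => ?_
  rw [← Finset.mul_sum, hrow, mul_one]

lemma sum_pi_prod {ι κ : Type*} [Fintype ι] [DecidableEq ι] [Fintype κ] (g : ι → κ → ℝ) :
    ∑ y : ι → κ, ∏ j, g j (y j) = ∏ j, ∑ x, g j x := by
  calc ∑ y : ι → κ, ∏ j, g j (y j)
      = ∑ y ∈ Fintype.piFinset (fun _ : ι => (Finset.univ : Finset κ)), ∏ j, g j (y j) := by
        rw [Fintype.piFinset_univ]
    _ = ∏ j, ∑ x, g j x := (Finset.prod_univ_sum _ _).symm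

lemma sum_pi_prod_pin {ι κ : Type*} [Fintype ι] [DecidableEq ι] [Fintype κ] [DecidableEq κ]
    (g : ι → κ → ℝ) (i : ι) (d : κ) :
    ∑ y : ι → κ, (if y i = d then ∏ j, g j (y j) else 0)
      = g i d * ∏ j ∈ Finset.univ.erase i, (∑ x, g j x) := by
  set g' : ι → κ → ℝ := fun j x => if j = i then (if x = d then 1 else 0) else g j x with hg'
  have h1 : ∀ y : ι → κ, (if y i = d then ∏ j, g j (y j) else 0)
      = g i d * ((if y i = d then (1:ℝ) else 0) * ∏ j ∈ Finset.univ.erase i, g j (y j)) := by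
    intro y
    by_cases h : y i = d
    · rw [if_pos h, if_pos h, one_mul,
        ← Finset.mul_prod_erase Finset.univ (fun j => g j (y j)) (Finset.mem_univ i)]
      rw [h]
    · simp [h]
  simp only [h1]
  rw [← Finset.mul_sum]
  congr 1
  have h2 : ∀ y : ι → κ, (if y i = d then (1:ℝ) else 0) * ∏ j ∈ Finset.univ.erase i, g j (y j)
      = ∏ j, g' j (y j) := by
    intro y
    rw [← Finset.mul_prod_erase Finset.univ (fun j => g' j (y j)) (Finset.mem_univ i)]
    congr 1
    · simp [hg']
    · refine Finset.prod_congr rfl fun j hj => ?_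
      simp [hg', Finset.ne_of_mem_erase hj]
  simp only [h2]
  rw [sum_pi_prod g']
  rw [← Finset.mul_prod_erase Finset.univ (fun j => ∑ x, g' j x) (Finset.mem_univ i)]
  have hone : ∑ x, g' i x = 1 := by simp [hg']
  rw [hone, one_mul]
  exact Finset.prod_congr rfl fun j hj => by simp [hg', Finset.ne_of_mem_erase hj]

lemma distOf_apply_inj {α β : Type*} [Fintype α] [DecidableEq β] (p : α → ℝ) (f : α → β)
    (hf : Function.Injective f) (a : α) : distOf p f (f a) = p a := by
  unfold distOf
  rw [Finset.sum_eq_single a]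
  · simp
  · intro c _ hc
    rw [if_neg fun h => hc (hf h)]
  · simp

lemma distOf_fst_eq {Ω α β : Type*} [Fintype Ω] [Fintype β] [DecidableEq α] [DecidableEq β]
    (μ : Ω → ℝ) (V : Ω → α) (U : Ω → β) (s : α) :
    distOf μ V s = ∑ u, distOf μ (fun ω => (V ω, U ω)) (s, u) := by
  unfold distOf
  calc ∑ ω, (if V ω = s then μ ω else 0)
      = ∑ ω, ∑ u, (if (V ω, U ω) = (s, u) then μ ω else 0) := by
        refine Finset.sum_congr rfl fun ω _ => ?_
        by_cases h : V ω = s <;> simp [Prod.ext_iff, h, Finset.sum_ite_eq]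
    _ = ∑ u, ∑ ω, (if (V ω, U ω) = (s, u) then μ ω else 0) := Finset.sum_comm

lemma H_eq_ent_self {Ω : Type*} [Fintype Ω] [DecidableEq Ω] (μ : Ω → ℝ) :
    H μ (fun ω => ω) = -∑ ω, μ ω * Real.logb 2 (μ ω) := by
  unfold H ent
  congr 1
  refine Finset.sum_congr rfl fun ω _ => ?_
  have : distOf μ (fun ω => ω) ω = μ ω := by
    unfold distOf
    simp [Finset.sum_ite_eq']
  rw [this]

lemma H_inj_eq {Ω α : Type*} [Fintype Ω] [DecidableEq Ω] [Fintype α] [DecidableEq α]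
    (μ : Ω → ℝ) (T : Ω → α) (hT : Function.Injective T) :
    H μ T = -∑ ω, μ ω * Real.logb 2 (μ ω) := by
  rw [← H_eq_ent_self μ]
  exact H_comp_inj μ (fun ω => ω) T hT

lemma H_pair_unit {Ω α : Type*} [Fintype Ω] [Fintype α] [DecidableEq α]
    (μ : Ω → ℝ) (V : Ω → α) :
    H μ (fun ω => (V ω, ())) = H μ V :=
  H_comp_inj μ V (fun v => (v, ())) (fun x y h => (Prod.ext_iff.1 h).1)

end Channel



/-- For a DMIC satisfying the Markov chain `X2 - (X1,Y2) - Y1`, used `n`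
times memorylessly with independent input blocks,
`I(X1^n;Y1^n) + I(X2^n;Y2^n|X1^n) ≤ ∑ i, [ I(X1i;Y1i) + I(X2i;Y2i|X1i) ]`. -/
theorem nLetter_sum_bound_mixed_chain {A1 A2 B1 B2 : Type} [Fintype A1] [DecidableEq A1] [Fintype A2] [DecidableEq A2]
    [Fintype B1] [DecidableEq B1] [Fintype B2] [DecidableEq B2]
    (W : A1 → A2 → B1 × B2 → ℝ) (hW : IsChannel W) (hchain : ChainX2X1Y2Y1 W) (n : ℕ)
    (P1 : (Fin n → A1) → ℝ) (P2 : (Fin n → A2) → ℝ) (hP1 : IsPMF P1) (hP2 : IsPMF P2) :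
    let μ : (Fin n → A1) × (Fin n → A2) × (Fin n → B1) × (Fin n → B2) → ℝ :=
      fun z => P1 z.1 * P2 z.2.1 * nFold W n z.1 z.2.1 (z.2.2.1, z.2.2.2)
    MI μ (fun z => z.1) (fun z => z.2.2.1)
        + CMI μ (fun z => z.2.1) (fun z => z.2.2.2) (fun z => z.1)
      ≤ ∑ i : Fin n,
          (MI μ (fun z => z.1 i) (fun z => z.2.2.1 i)
            + CMI μ (fun z => z.2.1 i) (fun z => z.2.2.2 i) (fun z => z.1 i)) := by
  intro μ
  obtain ⟨pa, q, hpa, hq, hWfac⟩ := hchain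
  have hμdef : ∀ ω : (Fin n → A1) × (Fin n → A2) × (Fin n → B1) × (Fin n → B2),
      μ ω = P1 ω.1 * P2 ω.2.1 * ∏ j, W (ω.1 j) (ω.2.1 j) (ω.2.2.1 j, ω.2.2.2 j) :=
    fun ω => rfl
  have hW0 : ∀ x1 x2 y, 0 ≤ W x1 x2 y := fun x1 x2 y => (hW x1 x2).1 y
  have hWrow : ∀ x1 x2, ∑ y : B1 × B2, W x1 x2 y = 1 := fun x1 x2 => (hW x1 x2).2
  have hWrow2 : ∀ x1 x2, ∑ c : B1, ∑ d : B2, W x1 x2 (c, d) = 1 := by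
    intro x1 x2
    rw [← Fintype.sum_prod_type]
    exact hWrow x1 x2
  have hμ0 : ∀ ω : ((Fin n → A1) × (Fin n → A2) × (Fin n → B1) × (Fin n → B2)), 0 ≤ μ ω := fun ω => by
    rw [hμdef ω]
    exact mul_nonneg (mul_nonneg (hP1.1 _) (hP2.1 _))
      (Finset.prod_nonneg fun j _ => hW0 _ _ _)
  have hrownFold : ∀ (u : Fin n → A1) (v : Fin n → A2),
      ∑ y1 : Fin n → B1, ∑ y2 : Fin n → B2, ∏ j, W (u j) (v j) (y1 j, y2 j) = 1 := by
    intro u v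
    have inner : ∀ y1 : Fin n → B1,
        ∑ y2 : Fin n → B2, ∏ j, W (u j) (v j) (y1 j, y2 j)
          = ∏ j, ∑ x, W (u j) (v j) (y1 j, x) :=
      fun y1 => sum_pi_prod (fun j x => W (u j) (v j) (y1 j, x))
    calc ∑ y1 : Fin n → B1, ∑ y2 : Fin n → B2, ∏ j, W (u j) (v j) (y1 j, y2 j)
        = ∑ y1 : Fin n → B1, ∏ j, ∑ x, W (u j) (v j) (y1 j, x) :=
          Finset.sum_congr rfl fun y1 _ => inner y1
      _ = ∏ j, ∑ s, ∑ x, W (u j) (v j) (s, x) :=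
          sum_pi_prod (fun j s => ∑ x, W (u j) (v j) (s, x))
      _ = 1 := by
          rw [Finset.prod_congr rfl fun j _ => hWrow2 (u j) (v j), Finset.prod_const_one]
  have hμ1 : ∑ ω : ((Fin n → A1) × (Fin n → A2) × (Fin n → B1) × (Fin n → B2)), μ ω = 1 := by
    calc ∑ ω : ((Fin n → A1) × (Fin n → A2) × (Fin n → B1) × (Fin n → B2)), μ ω
        = ∑ u1 : Fin n → A1, ∑ u2 : Fin n → A2, ∑ y1 : Fin n → B1, ∑ y2 : Fin n → B2,
            P1 u1 * P2 u2 * ∏ j, W (u1 j) (u2 j) (y1 j, y2 j) := by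
          simp only [Fintype.sum_prod_type]
          rfl
      _ = ∑ u1, ∑ u2, P1 u1 * P2 u2 := by
          refine Finset.sum_congr rfl fun u1 _ => Finset.sum_congr rfl fun u2 _ => ?_
          simp only [← Finset.mul_sum]
          rw [hrownFold u1 u2, mul_one]
      _ = (∑ u1, P1 u1) * (∑ u2, P2 u2) := (Finset.sum_mul_sum _ _ _ _).symm
      _ = 1 := by rw [hP1.2, hP2.2, mul_one]
  -- the per-letter joint distribution
  have hnu : ∀ (i : Fin n) (a : A1) (b : A2) (c : B1) (d : B2),
      distOf μ (fun ω : ((Fin n → A1) × (Fin n → A2) × (Fin n → B1) × (Fin n → B2)) => (ω.1 i, ω.2.1 i, ω.2.2.1 i, ω.2.2.2 i)) (a, b, c, d)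
        = distOf P1 (fun u => u i) a * distOf P2 (fun u => u i) b * W a b (c, d) := by
    intro i a b c d
    have houtc : ∀ (u1 : Fin n → A1) (u2 : Fin n → A2),
        ∑ y1 : Fin n → B1, ∑ y2 : Fin n → B2,
          (if y1 i = c then if y2 i = d then ∏ j, W (u1 j) (u2 j) (y1 j, y2 j) else 0 else 0)
          = W (u1 i) (u2 i) (c, d) := by
      intro u1 u2
      have step1 : ∀ y1 : Fin n → B1,
          ∑ y2 : Fin n → B2,
            (if y1 i = c then if y2 i = d then ∏ j, W (u1 j) (u2 j) (y1 j, y2 j) else 0 else 0)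
          = (if y1 i = c then
              W (u1 i) (u2 i) (c, d)
                * ∏ j ∈ Finset.univ.erase i, (∑ x, W (u1 j) (u2 j) (y1 j, x)) else 0) := by
        intro y1
        by_cases h : y1 i = c
        · simp only [h, eq_self_iff_true, if_true]
          rw [sum_pi_prod_pin (fun j x => W (u1 j) (u2 j) (y1 j, x)) i d, h]
        · simp [h]
      simp only [step1]
      set lam : Fin n → B1 → ℝ := fun j s =>
        if j = i then W (u1 i) (u2 i) (s, d) else ∑ x, W (u1 j) (u2 j) (s, x) with hlam
      have step2 : ∀ y1 : Fin n → B1,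
          (if y1 i = c then
            W (u1 i) (u2 i) (c, d)
              * ∏ j ∈ Finset.univ.erase i, (∑ x, W (u1 j) (u2 j) (y1 j, x)) else 0)
          = (if y1 i = c then ∏ j, lam j (y1 j) else 0) := by
        intro y1
        by_cases h : y1 i = c
        · simp only [h, eq_self_iff_true, if_true]
          rw [← Finset.mul_prod_erase Finset.univ (fun j => lam j (y1 j)) (Finset.mem_univ i)]
          congr 1
          · simp [hlam, h]
          · exact Finset.prod_congr rfl fun j hj => by simp [hlam, Finset.ne_of_mem_erase hj]
        · simp [h]
      simp only [step2]
      rw [sum_pi_prod_pin lam i c]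
      have h1 : lam i c = W (u1 i) (u2 i) (c, d) := by simp [hlam]
      have h2 : ∀ j ∈ Finset.univ.erase i, ∑ s, lam j s = 1 := by
        intro j hj
        simp only [hlam, Finset.ne_of_mem_erase hj, if_false]
        exact hWrow2 (u1 j) (u2 j)
      rw [h1, Finset.prod_congr rfl h2, Finset.prod_const_one, mul_one]
    calc distOf μ (fun ω : ((Fin n → A1) × (Fin n → A2) × (Fin n → B1) × (Fin n → B2)) => (ω.1 i, ω.2.1 i, ω.2.2.1 i, ω.2.2.2 i)) (a, b, c, d)
        = ∑ u1 : Fin n → A1, ∑ u2 : Fin n → A2, ∑ y1 : Fin n → B1, ∑ y2 : Fin n → B2,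
            (if u1 i = a then if u2 i = b then if y1 i = c then if y2 i = d
              then P1 u1 * P2 u2 * ∏ j, W (u1 j) (u2 j) (y1 j, y2 j)
              else 0 else 0 else 0 else 0) := by
          unfold distOf
          simp only [Fintype.sum_prod_type]
          refine Finset.sum_congr rfl fun u1 _ => Finset.sum_congr rfl fun u2 _ =>
            Finset.sum_congr rfl fun y1 _ => Finset.sum_congr rfl fun y2 _ => ?_
          rw [hμdef (u1, u2, y1, y2)]
          by_cases h1 : u1 i = a <;> by_cases h2 : u2 i = b <;> by_cases h3 : y1 i = c <;>
            by_cases h4 : y2 i = d <;> simp [Prod.ext_iff, h1, h2, h3, h4]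
      _ = ∑ u1 : Fin n → A1, ∑ u2 : Fin n → A2,
            (if u1 i = a then if u2 i = b
              then P1 u1 * P2 u2 * W (u1 i) (u2 i) (c, d) else 0 else 0) := by
          refine Finset.sum_congr rfl fun u1 _ => Finset.sum_congr rfl fun u2 _ => ?_
          by_cases h1 : u1 i = a
          · by_cases h2 : u2 i = b
            · simp only [h1, h2, eq_self_iff_true, if_true]
              have pull : ∀ (y1 : Fin n → B1) (y2 : Fin n → B2),
                  (if y1 i = c then if y2 i = d
                    then P1 u1 * P2 u2 * ∏ j, W (u1 j) (u2 j) (y1 j, y2 j)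
                    else 0 else 0)
                  = P1 u1 * P2 u2 * (if y1 i = c then if y2 i = d
                      then ∏ j, W (u1 j) (u2 j) (y1 j, y2 j) else 0 else 0) := by
                intro y1 y2
                by_cases h3 : y1 i = c <;> by_cases h4 : y2 i = d <;> simp [h3, h4]
              simp only [pull, ← Finset.mul_sum]
              rw [houtc u1 u2, h1, h2]
            · simp [h2]
          · simp [h1]
      _ = ∑ u1 : Fin n → A1, ∑ u2 : Fin n → A2,
            ((if u1 i = a then P1 u1 else 0) * (if u2 i = b then P2 u2 else 0)
              * W a b (c, d)) := by
          refine Finset.sum_congr rfl fun u1 _ => Finset.sum_congr rfl fun u2 _ => ?_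
          by_cases h1 : u1 i = a
          · by_cases h2 : u2 i = b
            · rw [h1, h2]; simp
            · simp [h2]
          · simp [h1]
      _ = distOf P1 (fun u => u i) a * distOf P2 (fun u => u i) b * W a b (c, d) := by
          have e : ∀ u1 : Fin n → A1,
              ∑ u2 : Fin n → A2, ((if u1 i = a then P1 u1 else 0)
                  * (if u2 i = b then P2 u2 else 0) * W a b (c, d))
              = (if u1 i = a then P1 u1 else 0)
                  * (∑ u2 : Fin n → A2, (if u2 i = b then P2 u2 else 0)) * W a b (c, d) := by
            intro u1
            simp only [Finset.mul_sum, Finset.sum_mul]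
          simp only [e]
          rw [← Finset.sum_mul, ← Finset.sum_mul]
          rfl

  -- the letterwise channel-entropy quantities
  set d : Fin n → ℝ := fun i =>
    -∑ ω : ((Fin n → A1) × (Fin n → A2) × (Fin n → B1) × (Fin n → B2)), μ ω * Real.logb 2 (W (ω.1 i) (ω.2.1 i) (ω.2.2.1 i, ω.2.2.2 i)) with hd_def
  -- Step A
  have stepA : MI μ (fun z : ((Fin n → A1) × (Fin n → A2) × (Fin n → B1) × (Fin n → B2)) => z.1) (fun z : ((Fin n → A1) × (Fin n → A2) × (Fin n → B1) × (Fin n → B2)) => z.2.2.1)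
        + CMI μ (fun z : ((Fin n → A1) × (Fin n → A2) × (Fin n → B1) × (Fin n → B2)) => z.2.1) (fun z : ((Fin n → A1) × (Fin n → A2) × (Fin n → B1) × (Fin n → B2)) => z.2.2.2) (fun z : ((Fin n → A1) × (Fin n → A2) × (Fin n → B1) × (Fin n → B2)) => z.1)
      ≤ H μ (fun ω : ((Fin n → A1) × (Fin n → A2) × (Fin n → B1) × (Fin n → B2)) => ω.2.2.1)
        + (H μ (fun ω : ((Fin n → A1) × (Fin n → A2) × (Fin n → B1) × (Fin n → B2)) => (ω.2.2.2, (ω.1, ω.2.2.1))) - H μ (fun ω : ((Fin n → A1) × (Fin n → A2) × (Fin n → B1) × (Fin n → B2)) => (ω.1, ω.2.2.1)))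
        + (H μ (fun ω : ((Fin n → A1) × (Fin n → A2) × (Fin n → B1) × (Fin n → B2)) => (ω.1, ω.2.1))
            - H μ (fun ω : ((Fin n → A1) × (Fin n → A2) × (Fin n → B1) × (Fin n → B2)) => ((ω.1, ω.2.1), (ω.2.2.1, ω.2.2.2)))) := by
    have hA0 := CMI_nonneg μ (fun z : ((Fin n → A1) × (Fin n → A2) × (Fin n → B1) × (Fin n → B2)) => z.2.1) (fun z : ((Fin n → A1) × (Fin n → A2) × (Fin n → B1) × (Fin n → B2)) => z.2.2.1)
      (fun z : ((Fin n → A1) × (Fin n → A2) × (Fin n → B1) × (Fin n → B2)) => (z.1, z.2.2.2)) hμ0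
    have ra : H μ (fun ω : ((Fin n → A1) × (Fin n → A2) × (Fin n → B1) × (Fin n → B2)) => (ω.2.1, ω.1)) = H μ (fun ω : ((Fin n → A1) × (Fin n → A2) × (Fin n → B1) × (Fin n → B2)) => (ω.1, ω.2.1)) :=
      H_comp_inj μ (fun ω : ((Fin n → A1) × (Fin n → A2) × (Fin n → B1) × (Fin n → B2)) => (ω.1, ω.2.1)) (fun t => (t.2, t.1))
        (fun x y h => by
          obtain ⟨h1, h2⟩ := Prod.ext_iff.1 h
          exact Prod.ext_iff.2 ⟨h2, h1⟩)
    have rb : H μ (fun ω : ((Fin n → A1) × (Fin n → A2) × (Fin n → B1) × (Fin n → B2)) => (ω.2.1, (ω.1, ω.2.2.2)))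
        = H μ (fun ω : ((Fin n → A1) × (Fin n → A2) × (Fin n → B1) × (Fin n → B2)) => (ω.2.1, ω.2.2.2, ω.1)) :=
      H_comp_inj μ (fun ω : ((Fin n → A1) × (Fin n → A2) × (Fin n → B1) × (Fin n → B2)) => (ω.2.1, ω.2.2.2, ω.1)) (fun t => (t.1, (t.2.2, t.2.1)))
        (fun x y h => by
          obtain ⟨h1, h2⟩ := Prod.ext_iff.1 h
          obtain ⟨h3, h4⟩ := Prod.ext_iff.1 h2
          exact Prod.ext_iff.2 ⟨h1, Prod.ext_iff.2 ⟨h4, h3⟩⟩)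
    have rc : H μ (fun ω : ((Fin n → A1) × (Fin n → A2) × (Fin n → B1) × (Fin n → B2)) => (ω.1, ω.2.2.2)) = H μ (fun ω : ((Fin n → A1) × (Fin n → A2) × (Fin n → B1) × (Fin n → B2)) => (ω.2.2.2, ω.1)) :=
      H_comp_inj μ (fun ω : ((Fin n → A1) × (Fin n → A2) × (Fin n → B1) × (Fin n → B2)) => (ω.2.2.2, ω.1)) (fun t => (t.2, t.1))
        (fun x y h => by
          obtain ⟨h1, h2⟩ := Prod.ext_iff.1 h
          exact Prod.ext_iff.2 ⟨h2, h1⟩)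
    have rd : H μ (fun ω : ((Fin n → A1) × (Fin n → A2) × (Fin n → B1) × (Fin n → B2)) => (ω.2.2.1, (ω.1, ω.2.2.2)))
        = H μ (fun ω : ((Fin n → A1) × (Fin n → A2) × (Fin n → B1) × (Fin n → B2)) => (ω.2.2.2, (ω.1, ω.2.2.1))) :=
      H_comp_inj μ (fun ω : ((Fin n → A1) × (Fin n → A2) × (Fin n → B1) × (Fin n → B2)) => (ω.2.2.2, (ω.1, ω.2.2.1))) (fun t => (t.2.2, (t.2.1, t.1)))
        (fun x y h => by
          obtain ⟨h1, h2⟩ := Prod.ext_iff.1 h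
          obtain ⟨h3, h4⟩ := Prod.ext_iff.1 h2
          exact Prod.ext_iff.2 ⟨h4, Prod.ext_iff.2 ⟨h3, h1⟩⟩)
    have re : H μ (fun ω : ((Fin n → A1) × (Fin n → A2) × (Fin n → B1) × (Fin n → B2)) => (ω.2.1, ω.2.2.1, (ω.1, ω.2.2.2)))
        = H μ (fun ω : ((Fin n → A1) × (Fin n → A2) × (Fin n → B1) × (Fin n → B2)) => ((ω.1, ω.2.1), (ω.2.2.1, ω.2.2.2))) :=
      H_comp_inj μ (fun ω : ((Fin n → A1) × (Fin n → A2) × (Fin n → B1) × (Fin n → B2)) => ((ω.1, ω.2.1), (ω.2.2.1, ω.2.2.2)))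
        (fun t => (t.1.2, t.2.1, (t.1.1, t.2.2)))
        (fun x y h => by
          obtain ⟨h1, h2⟩ := Prod.ext_iff.1 h
          obtain ⟨h3, h4⟩ := Prod.ext_iff.1 h2
          obtain ⟨h5, h6⟩ := Prod.ext_iff.1 h4
          exact Prod.ext_iff.2 ⟨Prod.ext_iff.2 ⟨h5, h1⟩, Prod.ext_iff.2 ⟨h3, h6⟩⟩)
    unfold MI CMI at hA0 ⊢
    beta_reduce at hA0 ⊢
    beta_reduce at ra rb rc rd re
    linarith [hA0, ra, rb, rc, rd, re]

  -- Step B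
  have stepB : H μ (fun ω : ((Fin n → A1) × (Fin n → A2) × (Fin n → B1) × (Fin n → B2)) => ((ω.1, ω.2.1), (ω.2.2.1, ω.2.2.2)))
      - H μ (fun ω : ((Fin n → A1) × (Fin n → A2) × (Fin n → B1) × (Fin n → B2)) => (ω.1, ω.2.1)) = ∑ i, d i := by
    have hTinj : Function.Injective
        (fun ω : ((Fin n → A1) × (Fin n → A2) × (Fin n → B1) × (Fin n → B2)) => ((ω.1, ω.2.1), (ω.2.2.1, ω.2.2.2))) := by
      intro x y h
      obtain ⟨h1, h2⟩ := Prod.ext_iff.1 h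
      obtain ⟨h3, h4⟩ := Prod.ext_iff.1 h1
      obtain ⟨h5, h6⟩ := Prod.ext_iff.1 h2
      exact Prod.ext_iff.2 ⟨h3, Prod.ext_iff.2 ⟨h4, Prod.ext_iff.2 ⟨h5, h6⟩⟩⟩
    have h_full : H μ (fun ω : ((Fin n → A1) × (Fin n → A2) × (Fin n → B1) × (Fin n → B2)) => ((ω.1, ω.2.1), (ω.2.2.1, ω.2.2.2)))
        = -∑ ω : ((Fin n → A1) × (Fin n → A2) × (Fin n → B1) × (Fin n → B2)), μ ω * Real.logb 2 (μ ω) := H_inj_eq μ _ hTinj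
    have h_margin : ∀ (u : Fin n → A1) (v : Fin n → A2),
        distOf μ (fun ω : ((Fin n → A1) × (Fin n → A2) × (Fin n → B1) × (Fin n → B2)) => (ω.1, ω.2.1)) (u, v) = P1 u * P2 v := by
      intro u v
      calc distOf μ (fun ω : ((Fin n → A1) × (Fin n → A2) × (Fin n → B1) × (Fin n → B2)) => (ω.1, ω.2.1)) (u, v)
          = ∑ y : (Fin n → B1) × (Fin n → B2),
              distOf μ (fun ω : ((Fin n → A1) × (Fin n → A2) × (Fin n → B1) × (Fin n → B2)) => ((ω.1, ω.2.1), (ω.2.2.1, ω.2.2.2))) ((u, v), y) :=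
            distOf_fst_eq μ (fun ω : ((Fin n → A1) × (Fin n → A2) × (Fin n → B1) × (Fin n → B2)) => (ω.1, ω.2.1))
              (fun ω : ((Fin n → A1) × (Fin n → A2) × (Fin n → B1) × (Fin n → B2)) => (ω.2.2.1, ω.2.2.2)) (u, v)
        _ = ∑ y : (Fin n → B1) × (Fin n → B2), μ (u, v, y.1, y.2) := by
            refine Finset.sum_congr rfl fun y _ => ?_
            exact distOf_apply_inj μ _ hTinj (u, v, y.1, y.2)
        _ = ∑ y1 : Fin n → B1, ∑ y2 : Fin n → B2,
              P1 u * P2 v * ∏ j, W (u j) (v j) (y1 j, y2 j) := by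
            rw [Fintype.sum_prod_type]
            exact Finset.sum_congr rfl fun y1 _ => Finset.sum_congr rfl fun y2 _ =>
              hμdef (u, v, y1, y2)
        _ = P1 u * P2 v := by
            simp only [← Finset.mul_sum]
            rw [hrownFold u v, mul_one]
    have hH12 : H μ (fun ω : ((Fin n → A1) × (Fin n → A2) × (Fin n → B1) × (Fin n → B2)) => (ω.1, ω.2.1))
        = -∑ t : (Fin n → A1) × (Fin n → A2),
            (P1 t.1 * P2 t.2) * Real.logb 2 (P1 t.1 * P2 t.2) := by
      unfold H ent
      congr 1
      refine Finset.sum_congr rfl fun t _ => ?_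
      have hv : distOf μ (fun ω : ((Fin n → A1) × (Fin n → A2) × (Fin n → B1) × (Fin n → B2)) => (ω.1, ω.2.1)) t = P1 t.1 * P2 t.2 :=
        h_margin t.1 t.2
      rw [hv]
    have hsplit : ∀ ω : ((Fin n → A1) × (Fin n → A2) × (Fin n → B1) × (Fin n → B2)), μ ω * Real.logb 2 (μ ω)
        = μ ω * Real.logb 2 (P1 ω.1 * P2 ω.2.1)
          + ∑ i, μ ω * Real.logb 2 (W (ω.1 i) (ω.2.1 i) (ω.2.2.1 i, ω.2.2.2 i)) := by
      intro ω
      by_cases h : μ ω = 0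
      · simp [h]
      · have h' := h
        rw [hμdef ω] at h'
        obtain ⟨h12, hprod⟩ := mul_ne_zero_iff.1 h'
        have hfacs : ∀ j ∈ Finset.univ, W (ω.1 j) (ω.2.1 j) (ω.2.2.1 j, ω.2.2.2 j) ≠ 0 :=
          Finset.prod_ne_zero_iff.1 hprod
        calc μ ω * Real.logb 2 (μ ω)
            = μ ω * Real.logb 2 (P1 ω.1 * P2 ω.2.1
                * ∏ j, W (ω.1 j) (ω.2.1 j) (ω.2.2.1 j, ω.2.2.2 j)) := by rw [← hμdef ω]
          _ = μ ω * (Real.logb 2 (P1 ω.1 * P2 ω.2.1)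
                + ∑ i, Real.logb 2 (W (ω.1 i) (ω.2.1 i) (ω.2.2.1 i, ω.2.2.2 i))) := by
              rw [Real.logb_mul h12 hprod, Real.logb_prod Finset.univ _ hfacs]
          _ = _ := by rw [mul_add, Finset.mul_sum]
    have hfirst : ∑ ω : ((Fin n → A1) × (Fin n → A2) × (Fin n → B1) × (Fin n → B2)), μ ω * Real.logb 2 (P1 ω.1 * P2 ω.2.1)
        = ∑ t : (Fin n → A1) × (Fin n → A2),
            (P1 t.1 * P2 t.2) * Real.logb 2 (P1 t.1 * P2 t.2) := by
      have e := sum_mul_comp μ (fun ω : ((Fin n → A1) × (Fin n → A2) × (Fin n → B1) × (Fin n → B2)) => (ω.1, ω.2.1))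
        (fun t => Real.logb 2 (P1 t.1 * P2 t.2))
      rw [e]
      refine Finset.sum_congr rfl fun t _ => ?_
      rw [h_margin t.1 t.2]
    have e1 : ∑ ω : ((Fin n → A1) × (Fin n → A2) × (Fin n → B1) × (Fin n → B2)), μ ω * Real.logb 2 (μ ω)
        = (∑ t : (Fin n → A1) × (Fin n → A2),
            (P1 t.1 * P2 t.2) * Real.logb 2 (P1 t.1 * P2 t.2))
          + ∑ i : Fin n, ∑ ω : ((Fin n → A1) × (Fin n → A2) × (Fin n → B1) × (Fin n → B2)),
              μ ω * Real.logb 2 (W (ω.1 i) (ω.2.1 i) (ω.2.2.1 i, ω.2.2.2 i)) := by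
      calc ∑ ω : ((Fin n → A1) × (Fin n → A2) × (Fin n → B1) × (Fin n → B2)), μ ω * Real.logb 2 (μ ω)
          = ∑ ω : ((Fin n → A1) × (Fin n → A2) × (Fin n → B1) × (Fin n → B2)),
              (μ ω * Real.logb 2 (P1 ω.1 * P2 ω.2.1)
                + ∑ i, μ ω * Real.logb 2 (W (ω.1 i) (ω.2.1 i) (ω.2.2.1 i, ω.2.2.2 i))) :=
            Finset.sum_congr rfl fun ω _ => hsplit ω
        _ = (∑ ω : ((Fin n → A1) × (Fin n → A2) × (Fin n → B1) × (Fin n → B2)), μ ω * Real.logb 2 (P1 ω.1 * P2 ω.2.1))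
            + ∑ ω : ((Fin n → A1) × (Fin n → A2) × (Fin n → B1) × (Fin n → B2)), ∑ i,
                μ ω * Real.logb 2 (W (ω.1 i) (ω.2.1 i) (ω.2.2.1 i, ω.2.2.2 i)) :=
            Finset.sum_add_distrib
        _ = _ := by rw [hfirst, Finset.sum_comm]
    have e2 : ∑ i, d i = -∑ i : Fin n, ∑ ω : ((Fin n → A1) × (Fin n → A2) × (Fin n → B1) × (Fin n → B2)),
        μ ω * Real.logb 2 (W (ω.1 i) (ω.2.1 i) (ω.2.2.1 i, ω.2.2.2 i)) := by
      simp only [hd_def]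
      rw [Finset.sum_neg_distrib]
    rw [h_full, hH12, e1, e2]
    ring

  -- Step C1
  have stepC1 : H μ (fun ω : ((Fin n → A1) × (Fin n → A2) × (Fin n → B1) × (Fin n → B2)) => ω.2.2.1) ≤ ∑ i, H μ (fun ω : ((Fin n → A1) × (Fin n → A2) × (Fin n → B1) × (Fin n → B2)) => ω.2.2.1 i) := by
    have hunit : H μ (fun _ : ((Fin n → A1) × (Fin n → A2) × (Fin n → B1) × (Fin n → B2)) => ()) = 0 := H_const_unit μ hμ1
    have h := subadd_cond μ hμ0 (fun ω : ((Fin n → A1) × (Fin n → A2) × (Fin n → B1) × (Fin n → B2)) => ω.2.2.1) (fun _ : ((Fin n → A1) × (Fin n → A2) × (Fin n → B1) × (Fin n → B2)) => ())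
      (fun _ _ => ())
    have e0 : H μ (fun ω : ((Fin n → A1) × (Fin n → A2) × (Fin n → B1) × (Fin n → B2)) => (ω.2.2.1, ())) = H μ (fun ω : ((Fin n → A1) × (Fin n → A2) × (Fin n → B1) × (Fin n → B2)) => ω.2.2.1) :=
      H_pair_unit μ _
    have e1 : ∀ i : Fin n,
        H μ (fun ω : ((Fin n → A1) × (Fin n → A2) × (Fin n → B1) × (Fin n → B2)) => (ω.2.2.1 i, ())) = H μ (fun ω : ((Fin n → A1) × (Fin n → A2) × (Fin n → B1) × (Fin n → B2)) => ω.2.2.1 i) :=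
      fun i => H_pair_unit μ _
    have h' : H μ (fun ω : ((Fin n → A1) × (Fin n → A2) × (Fin n → B1) × (Fin n → B2)) => (ω.2.2.1, ())) - H μ (fun _ : ((Fin n → A1) × (Fin n → A2) × (Fin n → B1) × (Fin n → B2)) => ())
        ≤ ∑ i : Fin n, (H μ (fun ω : ((Fin n → A1) × (Fin n → A2) × (Fin n → B1) × (Fin n → B2)) => (ω.2.2.1 i, ())) - H μ (fun _ : ((Fin n → A1) × (Fin n → A2) × (Fin n → B1) × (Fin n → B2)) => ())) := h
    have h'' : ∑ i : Fin n, (H μ (fun ω : ((Fin n → A1) × (Fin n → A2) × (Fin n → B1) × (Fin n → B2)) => (ω.2.2.1 i, ())) - H μ (fun _ : ((Fin n → A1) × (Fin n → A2) × (Fin n → B1) × (Fin n → B2)) => ()))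
        = ∑ i : Fin n, H μ (fun ω : ((Fin n → A1) × (Fin n → A2) × (Fin n → B1) × (Fin n → B2)) => ω.2.2.1 i) := by
      refine Finset.sum_congr rfl fun i _ => ?_
      rw [e1 i, hunit, sub_zero]
    rw [h''] at h'
    rw [e0, hunit, sub_zero] at h'
    exact h'

  -- Step C2
  have stepC2 : H μ (fun ω : ((Fin n → A1) × (Fin n → A2) × (Fin n → B1) × (Fin n → B2)) => (ω.2.2.2, (ω.1, ω.2.2.1))) - H μ (fun ω : ((Fin n → A1) × (Fin n → A2) × (Fin n → B1) × (Fin n → B2)) => (ω.1, ω.2.2.1))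
      ≤ ∑ i, (H μ (fun ω : ((Fin n → A1) × (Fin n → A2) × (Fin n → B1) × (Fin n → B2)) => (ω.2.2.2 i, (ω.1 i, ω.2.2.1 i)))
          - H μ (fun ω : ((Fin n → A1) × (Fin n → A2) × (Fin n → B1) × (Fin n → B2)) => (ω.1 i, ω.2.2.1 i))) := by
    exact subadd_cond μ hμ0 (fun ω : ((Fin n → A1) × (Fin n → A2) × (Fin n → B1) × (Fin n → B2)) => ω.2.2.2)
      (fun ω : ((Fin n → A1) × (Fin n → A2) × (Fin n → B1) × (Fin n → B2)) => (ω.1, ω.2.2.1)) (fun i c => (c.1 i, c.2 i))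

  -- Step D
  have stepD : ∀ i : Fin n,
      H μ (fun ω : ((Fin n → A1) × (Fin n → A2) × (Fin n → B1) × (Fin n → B2)) => ω.2.2.1 i)
        + (H μ (fun ω : ((Fin n → A1) × (Fin n → A2) × (Fin n → B1) × (Fin n → B2)) => (ω.2.2.2 i, (ω.1 i, ω.2.2.1 i)))
            - H μ (fun ω : ((Fin n → A1) × (Fin n → A2) × (Fin n → B1) × (Fin n → B2)) => (ω.1 i, ω.2.2.1 i))) - d i
      = MI μ (fun z : ((Fin n → A1) × (Fin n → A2) × (Fin n → B1) × (Fin n → B2)) => z.1 i) (fun z : ((Fin n → A1) × (Fin n → A2) × (Fin n → B1) × (Fin n → B2)) => z.2.2.1 i)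
        + CMI μ (fun z : ((Fin n → A1) × (Fin n → A2) × (Fin n → B1) × (Fin n → B2)) => z.2.1 i) (fun z : ((Fin n → A1) × (Fin n → A2) × (Fin n → B1) × (Fin n → B2)) => z.2.2.2 i) (fun z : ((Fin n → A1) × (Fin n → A2) × (Fin n → B1) × (Fin n → B2)) => z.1 i) := by
    intro i
    set Q1 : A1 → ℝ := distOf P1 (fun u => u i) with hQ1
    set Q2 : A2 → ℝ := distOf P2 (fun u => u i) with hQ2
    have hQ10 : ∀ aa, 0 ≤ Q1 aa := fun aa => distOf_nonneg P1 hP1.1 _ aa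
    have hQ20 : ∀ bb, 0 ≤ Q2 bb := fun bb => distOf_nonneg P2 hP2.1 _ bb
    have hKrow : ∀ s : A1 × A2, ∑ y : B1 × B2, W s.1 s.2 y = 1 := fun s => hWrow s.1 s.2
    have htupinj : Function.Injective
        (fun t : A1 × A2 × B1 × B2 => ((t.1, t.2.1), (t.2.2.1, t.2.2.2))) := by
      intro x y h
      obtain ⟨h1, h2⟩ := Prod.ext_iff.1 h
      obtain ⟨h3, h4⟩ := Prod.ext_iff.1 h1
      obtain ⟨h5, h6⟩ := Prod.ext_iff.1 h2
      exact Prod.ext_iff.2 ⟨h3, Prod.ext_iff.2 ⟨h4, Prod.ext_iff.2 ⟨h5, h6⟩⟩⟩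
    have h_joint : ∀ (s : A1 × A2) (y : B1 × B2),
        distOf μ (fun ω : ((Fin n → A1) × (Fin n → A2) × (Fin n → B1) × (Fin n → B2)) => ((ω.1 i, ω.2.1 i), (ω.2.2.1 i, ω.2.2.2 i))) (s, y)
          = (Q1 s.1 * Q2 s.2) * W s.1 s.2 y := by
      intro s y
      calc distOf μ (fun ω : ((Fin n → A1) × (Fin n → A2) × (Fin n → B1) × (Fin n → B2)) => ((ω.1 i, ω.2.1 i), (ω.2.2.1 i, ω.2.2.2 i))) (s, y)
          = distOf (distOf μ (fun ω : ((Fin n → A1) × (Fin n → A2) × (Fin n → B1) × (Fin n → B2)) => (ω.1 i, ω.2.1 i, ω.2.2.1 i, ω.2.2.2 i)))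
              (fun t : A1 × A2 × B1 × B2 => ((t.1, t.2.1), (t.2.2.1, t.2.2.2))) (s, y) :=
            congrFun (distOf_comp μ (fun ω : ((Fin n → A1) × (Fin n → A2) × (Fin n → B1) × (Fin n → B2)) => (ω.1 i, ω.2.1 i, ω.2.2.1 i, ω.2.2.2 i))
              (fun t : A1 × A2 × B1 × B2 => ((t.1, t.2.1), (t.2.2.1, t.2.2.2)))) (s, y)
        _ = distOf μ (fun ω : ((Fin n → A1) × (Fin n → A2) × (Fin n → B1) × (Fin n → B2)) => (ω.1 i, ω.2.1 i, ω.2.2.1 i, ω.2.2.2 i))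
              (s.1, s.2, y.1, y.2) :=
            distOf_apply_inj _ _ htupinj (s.1, s.2, y.1, y.2)
        _ = (Q1 s.1 * Q2 s.2) * W s.1 s.2 y := by
            rw [hnu i s.1 s.2 y.1 y.2]
    have h_marg : ∀ s : A1 × A2,
        distOf μ (fun ω : ((Fin n → A1) × (Fin n → A2) × (Fin n → B1) × (Fin n → B2)) => (ω.1 i, ω.2.1 i)) s = Q1 s.1 * Q2 s.2 := by
      intro s
      calc distOf μ (fun ω : ((Fin n → A1) × (Fin n → A2) × (Fin n → B1) × (Fin n → B2)) => (ω.1 i, ω.2.1 i)) s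
          = ∑ y : B1 × B2,
              distOf μ (fun ω : ((Fin n → A1) × (Fin n → A2) × (Fin n → B1) × (Fin n → B2)) => ((ω.1 i, ω.2.1 i), (ω.2.2.1 i, ω.2.2.2 i))) (s, y) :=
            distOf_fst_eq μ (fun ω : ((Fin n → A1) × (Fin n → A2) × (Fin n → B1) × (Fin n → B2)) => (ω.1 i, ω.2.1 i))
              (fun ω : ((Fin n → A1) × (Fin n → A2) × (Fin n → B1) × (Fin n → B2)) => (ω.2.2.1 i, ω.2.2.2 i)) s
        _ = ∑ y : B1 × B2, (Q1 s.1 * Q2 s.2) * W s.1 s.2 y :=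
            Finset.sum_congr rfl fun y _ => h_joint s y
        _ = Q1 s.1 * Q2 s.2 := by rw [← Finset.mul_sum, hKrow s, mul_one]
    have hd_i : d i = -∑ s : A1 × A2, ∑ y : B1 × B2,
        ((Q1 s.1 * Q2 s.2) * W s.1 s.2 y) * Real.logb 2 (W s.1 s.2 y) := by
      have e : ∑ ω : ((Fin n → A1) × (Fin n → A2) × (Fin n → B1) × (Fin n → B2)), μ ω * Real.logb 2 (W (ω.1 i) (ω.2.1 i) (ω.2.2.1 i, ω.2.2.2 i))
          = ∑ t : (A1 × A2) × (B1 × B2),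
              distOf μ (fun ω : ((Fin n → A1) × (Fin n → A2) × (Fin n → B1) × (Fin n → B2)) => ((ω.1 i, ω.2.1 i), (ω.2.2.1 i, ω.2.2.2 i))) t
                * Real.logb 2 (W t.1.1 t.1.2 t.2) :=
        sum_mul_comp μ (fun ω : ((Fin n → A1) × (Fin n → A2) × (Fin n → B1) × (Fin n → B2)) => ((ω.1 i, ω.2.1 i), (ω.2.2.1 i, ω.2.2.2 i)))
          (fun t => Real.logb 2 (W t.1.1 t.1.2 t.2))
      have e2 : ∑ t : (A1 × A2) × (B1 × B2),
          distOf μ (fun ω : ((Fin n → A1) × (Fin n → A2) × (Fin n → B1) × (Fin n → B2)) => ((ω.1 i, ω.2.1 i), (ω.2.2.1 i, ω.2.2.2 i))) t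
            * Real.logb 2 (W t.1.1 t.1.2 t.2)
          = ∑ s : A1 × A2, ∑ y : B1 × B2,
              ((Q1 s.1 * Q2 s.2) * W s.1 s.2 y) * Real.logb 2 (W s.1 s.2 y) := by
        rw [Fintype.sum_prod_type]
        refine Finset.sum_congr rfl fun s _ => Finset.sum_congr rfl fun y _ => ?_
        have hv : distOf μ (fun ω : ((Fin n → A1) × (Fin n → A2) × (Fin n → B1) × (Fin n → B2)) => ((ω.1 i, ω.2.1 i), (ω.2.2.1 i, ω.2.2.2 i))) (s, y)
            = (Q1 s.1 * Q2 s.2) * W s.1 s.2 y := h_joint s y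
        rw [hv]
      simp only [hd_def]
      rw [e, e2]
    have hH_joint : H μ (fun ω : ((Fin n → A1) × (Fin n → A2) × (Fin n → B1) × (Fin n → B2)) => ((ω.1 i, ω.2.1 i), (ω.2.2.1 i, ω.2.2.2 i)))
        = -∑ s : A1 × A2, ∑ y : B1 × B2,
            ((Q1 s.1 * Q2 s.2) * W s.1 s.2 y)
              * Real.logb 2 ((Q1 s.1 * Q2 s.2) * W s.1 s.2 y) := by
      unfold H ent
      rw [Fintype.sum_prod_type]
      congr 1
      refine Finset.sum_congr rfl fun s _ => Finset.sum_congr rfl fun y _ => ?_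
      have hv : distOf μ (fun ω : ((Fin n → A1) × (Fin n → A2) × (Fin n → B1) × (Fin n → B2)) => ((ω.1 i, ω.2.1 i), (ω.2.2.1 i, ω.2.2.2 i))) (s, y)
          = (Q1 s.1 * Q2 s.2) * W s.1 s.2 y := h_joint s y
      rw [hv]
    have hH_marg : H μ (fun ω : ((Fin n → A1) × (Fin n → A2) × (Fin n → B1) × (Fin n → B2)) => (ω.1 i, ω.2.1 i))
        = -∑ s : A1 × A2, (Q1 s.1 * Q2 s.2) * Real.logb 2 (Q1 s.1 * Q2 s.2) := by
      unfold H ent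
      congr 1
      refine Finset.sum_congr rfl fun s _ => ?_
      rw [h_marg s]
    have hcond : H μ (fun ω : ((Fin n → A1) × (Fin n → A2) × (Fin n → B1) × (Fin n → B2)) => ((ω.1 i, ω.2.1 i), (ω.2.2.1 i, ω.2.2.2 i)))
        - H μ (fun ω : ((Fin n → A1) × (Fin n → A2) × (Fin n → B1) × (Fin n → B2)) => (ω.1 i, ω.2.1 i)) = d i := by
      rw [hH_joint, hH_marg, hd_i]
      have e := ent_joint_channel (fun s : A1 × A2 => Q1 s.1 * Q2 s.2)
        (fun s y => W s.1 s.2 y) hKrow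
      linarith [e]
    have hf'inj : Function.Injective
        (fun t : A1 × A2 × B1 × B2 => (t.2.2.1, t.2.1, (t.1, t.2.2.2))) := by
      intro x y h
      obtain ⟨h1, h2⟩ := Prod.ext_iff.1 h
      obtain ⟨h3, h4⟩ := Prod.ext_iff.1 h2
      obtain ⟨h5, h6⟩ := Prod.ext_iff.1 h4
      exact Prod.ext_iff.2 ⟨h5, Prod.ext_iff.2 ⟨h3, Prod.ext_iff.2 ⟨h1, h6⟩⟩⟩
    have hfac : ∀ (cc : B1) (bb : A2) (zz : A1 × B2),
        distOf μ (fun ω : ((Fin n → A1) × (Fin n → A2) × (Fin n → B1) × (Fin n → B2)) => (ω.2.2.1 i, ω.2.1 i, (ω.1 i, ω.2.2.2 i))) (cc, bb, zz)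
          = (fun (cc : B1) (zz : A1 × B2) => q zz.1 zz.2 cc) cc zz
            * (fun (bb : A2) (zz : A1 × B2) => Q1 zz.1 * Q2 bb * pa zz.1 bb zz.2) bb zz := by
      intro cc bb zz
      obtain ⟨aa, dd⟩ := zz
      calc distOf μ (fun ω : ((Fin n → A1) × (Fin n → A2) × (Fin n → B1) × (Fin n → B2)) => (ω.2.2.1 i, ω.2.1 i, (ω.1 i, ω.2.2.2 i))) (cc, bb, (aa, dd))
          = distOf (distOf μ (fun ω : ((Fin n → A1) × (Fin n → A2) × (Fin n → B1) × (Fin n → B2)) => (ω.1 i, ω.2.1 i, ω.2.2.1 i, ω.2.2.2 i)))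
              (fun t : A1 × A2 × B1 × B2 => (t.2.2.1, t.2.1, (t.1, t.2.2.2))) (cc, bb, (aa, dd)) :=
            congrFun (distOf_comp μ (fun ω : ((Fin n → A1) × (Fin n → A2) × (Fin n → B1) × (Fin n → B2)) => (ω.1 i, ω.2.1 i, ω.2.2.1 i, ω.2.2.2 i))
              (fun t : A1 × A2 × B1 × B2 => (t.2.2.1, t.2.1, (t.1, t.2.2.2)))) (cc, bb, (aa, dd))
        _ = distOf μ (fun ω : ((Fin n → A1) × (Fin n → A2) × (Fin n → B1) × (Fin n → B2)) => (ω.1 i, ω.2.1 i, ω.2.2.1 i, ω.2.2.2 i)) (aa, bb, cc, dd) :=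
            distOf_apply_inj _ _ hf'inj (aa, bb, cc, dd)
        _ = Q1 aa * Q2 bb * W aa bb (cc, dd) := by rw [hnu i aa bb cc dd]
        _ = q aa dd cc * (Q1 aa * Q2 bb * pa aa bb dd) := by
            rw [hWfac aa bb cc dd]; ring
    have hCMI0 : CMI μ (fun z : ((Fin n → A1) × (Fin n → A2) × (Fin n → B1) × (Fin n → B2)) => z.2.2.1 i) (fun z : ((Fin n → A1) × (Fin n → A2) × (Fin n → B1) × (Fin n → B2)) => z.2.1 i)
        (fun z : ((Fin n → A1) × (Fin n → A2) × (Fin n → B1) × (Fin n → B2)) => (z.1 i, z.2.2.2 i)) = 0 :=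
      CMI_eq_zero_of_factor μ _ _ _
        (fun (cc : B1) (zz : A1 × B2) => q zz.1 zz.2 cc)
        (fun (bb : A2) (zz : A1 × B2) => Q1 zz.1 * Q2 bb * pa zz.1 bb zz.2)
        (fun cc zz => (hq zz.1 zz.2).1 cc)
        (fun bb zz => mul_nonneg (mul_nonneg (hQ10 _) (hQ20 _)) ((hpa zz.1 bb).1 zz.2))
        hfac
    have s1 : H μ (fun ω : ((Fin n → A1) × (Fin n → A2) × (Fin n → B1) × (Fin n → B2)) => (ω.2.2.1 i, (ω.1 i, ω.2.2.2 i)))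
        = H μ (fun ω : ((Fin n → A1) × (Fin n → A2) × (Fin n → B1) × (Fin n → B2)) => (ω.2.2.2 i, (ω.1 i, ω.2.2.1 i))) :=
      H_comp_inj μ (fun ω : ((Fin n → A1) × (Fin n → A2) × (Fin n → B1) × (Fin n → B2)) => (ω.2.2.2 i, (ω.1 i, ω.2.2.1 i)))
        (fun t => (t.2.2, (t.2.1, t.1)))
        (fun x y h => by
          obtain ⟨h1, h2⟩ := Prod.ext_iff.1 h
          obtain ⟨h3, h4⟩ := Prod.ext_iff.1 h2
          exact Prod.ext_iff.2 ⟨h4, Prod.ext_iff.2 ⟨h3, h1⟩⟩)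
    have s2 : H μ (fun ω : ((Fin n → A1) × (Fin n → A2) × (Fin n → B1) × (Fin n → B2)) => (ω.2.1 i, (ω.1 i, ω.2.2.2 i)))
        = H μ (fun ω : ((Fin n → A1) × (Fin n → A2) × (Fin n → B1) × (Fin n → B2)) => (ω.2.1 i, ω.2.2.2 i, ω.1 i)) :=
      H_comp_inj μ (fun ω : ((Fin n → A1) × (Fin n → A2) × (Fin n → B1) × (Fin n → B2)) => (ω.2.1 i, ω.2.2.2 i, ω.1 i))
        (fun t => (t.1, (t.2.2, t.2.1)))
        (fun x y h => by
          obtain ⟨h1, h2⟩ := Prod.ext_iff.1 h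
          obtain ⟨h3, h4⟩ := Prod.ext_iff.1 h2
          exact Prod.ext_iff.2 ⟨h1, Prod.ext_iff.2 ⟨h4, h3⟩⟩)
    have s3 : H μ (fun ω : ((Fin n → A1) × (Fin n → A2) × (Fin n → B1) × (Fin n → B2)) => (ω.2.2.1 i, ω.2.1 i, (ω.1 i, ω.2.2.2 i)))
        = H μ (fun ω : ((Fin n → A1) × (Fin n → A2) × (Fin n → B1) × (Fin n → B2)) => ((ω.1 i, ω.2.1 i), (ω.2.2.1 i, ω.2.2.2 i))) :=
      H_comp_inj μ (fun ω : ((Fin n → A1) × (Fin n → A2) × (Fin n → B1) × (Fin n → B2)) => ((ω.1 i, ω.2.1 i), (ω.2.2.1 i, ω.2.2.2 i)))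
        (fun t => (t.2.1, t.1.2, (t.1.1, t.2.2)))
        (fun x y h => by
          obtain ⟨h1, h2⟩ := Prod.ext_iff.1 h
          obtain ⟨h3, h4⟩ := Prod.ext_iff.1 h2
          obtain ⟨h5, h6⟩ := Prod.ext_iff.1 h4
          exact Prod.ext_iff.2 ⟨Prod.ext_iff.2 ⟨h5, h3⟩, Prod.ext_iff.2 ⟨h1, h6⟩⟩)
    have s4 : H μ (fun ω : ((Fin n → A1) × (Fin n → A2) × (Fin n → B1) × (Fin n → B2)) => (ω.1 i, ω.2.2.2 i))
        = H μ (fun ω : ((Fin n → A1) × (Fin n → A2) × (Fin n → B1) × (Fin n → B2)) => (ω.2.2.2 i, ω.1 i)) :=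
      H_comp_inj μ (fun ω : ((Fin n → A1) × (Fin n → A2) × (Fin n → B1) × (Fin n → B2)) => (ω.2.2.2 i, ω.1 i)) (fun t => (t.2, t.1))
        (fun x y h => by
          obtain ⟨h1, h2⟩ := Prod.ext_iff.1 h
          exact Prod.ext_iff.2 ⟨h2, h1⟩)
    have s5 : H μ (fun ω : ((Fin n → A1) × (Fin n → A2) × (Fin n → B1) × (Fin n → B2)) => (ω.2.1 i, ω.1 i))
        = H μ (fun ω : ((Fin n → A1) × (Fin n → A2) × (Fin n → B1) × (Fin n → B2)) => (ω.1 i, ω.2.1 i)) :=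
      H_comp_inj μ (fun ω : ((Fin n → A1) × (Fin n → A2) × (Fin n → B1) × (Fin n → B2)) => (ω.1 i, ω.2.1 i)) (fun t => (t.2, t.1))
        (fun x y h => by
          obtain ⟨h1, h2⟩ := Prod.ext_iff.1 h
          exact Prod.ext_iff.2 ⟨h2, h1⟩)
    unfold MI CMI
    unfold CMI at hCMI0
    beta_reduce at hCMI0 ⊢
    beta_reduce at hcond s1 s2 s3 s4 s5
    linarith [hcond, hCMI0, s1, s2, s3, s4, s5]

  -- assemble
  have hsum : ∑ i : Fin n,
      (MI μ (fun z : ((Fin n → A1) × (Fin n → A2) × (Fin n → B1) × (Fin n → B2)) => z.1 i) (fun z : ((Fin n → A1) × (Fin n → A2) × (Fin n → B1) × (Fin n → B2)) => z.2.2.1 i)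
        + CMI μ (fun z : ((Fin n → A1) × (Fin n → A2) × (Fin n → B1) × (Fin n → B2)) => z.2.1 i) (fun z : ((Fin n → A1) × (Fin n → A2) × (Fin n → B1) × (Fin n → B2)) => z.2.2.2 i) (fun z : ((Fin n → A1) × (Fin n → A2) × (Fin n → B1) × (Fin n → B2)) => z.1 i))
      = ∑ i, H μ (fun ω : ((Fin n → A1) × (Fin n → A2) × (Fin n → B1) × (Fin n → B2)) => ω.2.2.1 i)
        + ∑ i, (H μ (fun ω : ((Fin n → A1) × (Fin n → A2) × (Fin n → B1) × (Fin n → B2)) => (ω.2.2.2 i, (ω.1 i, ω.2.2.1 i)))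
            - H μ (fun ω : ((Fin n → A1) × (Fin n → A2) × (Fin n → B1) × (Fin n → B2)) => (ω.1 i, ω.2.2.1 i)))
        - ∑ i, d i := by
    rw [← Finset.sum_add_distrib, ← Finset.sum_sub_distrib]
    exact Finset.sum_congr rfl fun i _ => (stepD i).symm
  calc MI μ (fun z : ((Fin n → A1) × (Fin n → A2) × (Fin n → B1) × (Fin n → B2)) => z.1) (fun z : ((Fin n → A1) × (Fin n → A2) × (Fin n → B1) × (Fin n → B2)) => z.2.2.1)
        + CMI μ (fun z : ((Fin n → A1) × (Fin n → A2) × (Fin n → B1) × (Fin n → B2)) => z.2.1) (fun z : ((Fin n → A1) × (Fin n → A2) × (Fin n → B1) × (Fin n → B2)) => z.2.2.2) (fun z : ((Fin n → A1) × (Fin n → A2) × (Fin n → B1) × (Fin n → B2)) => z.1)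
      ≤ H μ (fun ω : ((Fin n → A1) × (Fin n → A2) × (Fin n → B1) × (Fin n → B2)) => ω.2.2.1)
        + (H μ (fun ω : ((Fin n → A1) × (Fin n → A2) × (Fin n → B1) × (Fin n → B2)) => (ω.2.2.2, (ω.1, ω.2.2.1))) - H μ (fun ω : ((Fin n → A1) × (Fin n → A2) × (Fin n → B1) × (Fin n → B2)) => (ω.1, ω.2.2.1)))
        + (H μ (fun ω : ((Fin n → A1) × (Fin n → A2) × (Fin n → B1) × (Fin n → B2)) => (ω.1, ω.2.1))
            - H μ (fun ω : ((Fin n → A1) × (Fin n → A2) × (Fin n → B1) × (Fin n → B2)) => ((ω.1, ω.2.1), (ω.2.2.1, ω.2.2.2)))) := stepA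
    _ ≤ ∑ i, H μ (fun ω : ((Fin n → A1) × (Fin n → A2) × (Fin n → B1) × (Fin n → B2)) => ω.2.2.1 i)
        + ∑ i, (H μ (fun ω : ((Fin n → A1) × (Fin n → A2) × (Fin n → B1) × (Fin n → B2)) => (ω.2.2.2 i, (ω.1 i, ω.2.2.1 i)))
            - H μ (fun ω : ((Fin n → A1) × (Fin n → A2) × (Fin n → B1) × (Fin n → B2)) => (ω.1 i, ω.2.2.1 i)))
        - ∑ i, d i := by linarith [stepB, stepC1, stepC2]
    _ = ∑ i : Fin n,
        (MI μ (fun z : ((Fin n → A1) × (Fin n → A2) × (Fin n → B1) × (Fin n → B2)) => z.1 i) (fun z : ((Fin n → A1) × (Fin n → A2) × (Fin n → B1) × (Fin n → B2)) => z.2.2.1 i)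
          + CMI μ (fun z : ((Fin n → A1) × (Fin n → A2) × (Fin n → B1) × (Fin n → B2)) => z.2.1 i) (fun z : ((Fin n → A1) × (Fin n → A2) × (Fin n → B1) × (Fin n → B2)) => z.2.2.2 i) (fun z : ((Fin n → A1) × (Fin n → A2) × (Fin n → B1) × (Fin n → B2)) => z.1 i)) :=
        hsum.symm


end IT
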